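/- arXiv:2305.04696 — 4 statements merged into one kernel-verified Lean document; each statement's English description precedes it below -/
import Mathlib

section
/- Let v1, v2 > 0, let m be a positive integer, and let 0 < b < m. If a strategy profile (X, Y) with E(X) = m and E(Y) = b is a Nash equilibrium of the two-player all-pay auction with valuations (v1, v2), then m = v2/2, (X, Y) is a Nash equilibrium of the discrete General Lotto game Γ(m, b), and X = U_O^m. -/
open scoped BigOperators

/-- A (mixed) strategy: a probability distribution on the nonnegative
integers with finite expectation. -/
structure Strategy where
  p : ℕ → ℝ
  nonneg : ∀ n, 0 ≤ p n
  total : HasSum p 1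
  finExp : Summable fun n : ℕ => (n : ℝ) * p n

namespace Strategy

/-- Expectation of a strategy. -/
noncomputable def exp (ξ : Strategy) : ℝ := ∑' n : ℕ, (n : ℝ) * ξ.p n

end Strategy

/-- Probability that an observation from `ξ` strictly exceeds an independent
observation from `η`. -/
noncomputable def prGT (ξ η : Strategy) : ℝ :=
  ∑' n, ξ.p n * ∑ k ∈ Finset.range n, η.p k

/-- Probability that independent observations from `ξ` and `η` are equal. -/
noncomputable def prEq (ξ η : Strategy) : ℝ := ∑' n, ξ.p n * η.p n

/-- Expected all-pay auction payoff of a player with valuation `v` playing `ξ`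
against `η`:  `v·Pr(X > Y) + (v/2)·Pr(X = Y) − E(X)`. -/
noncomputable def payoff (v : ℝ) (ξ η : Strategy) : ℝ :=
  v * prGT ξ η + v / 2 * prEq ξ η - ξ.exp

/-- Nash equilibrium of the two-player all-pay auction with valuations `(v1, v2)`. -/
def IsNashAPA (v1 v2 : ℝ) (X Y : Strategy) : Prop :=
  (∀ X' : Strategy, payoff v1 X' Y ≤ payoff v1 X Y) ∧
  (∀ Y' : Strategy, payoff v2 Y' X ≤ payoff v2 Y X)

/-- `H(ξ, η) = Pr(X > Y) − Pr(X < Y)`. -/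
noncomputable def Hval (ξ η : Strategy) : ℝ := prGT ξ η - prGT η ξ

/-- Nash equilibrium of the discrete General Lotto game `Γ(b1, b2)`. -/
def IsNashLotto (b1 b2 : ℝ) (X Y : Strategy) : Prop :=
  X.exp = b1 ∧ Y.exp = b2 ∧
  (∀ X' : Strategy, X'.exp = b1 → Hval X' Y ≤ Hval X Y) ∧
  (∀ Y' : Strategy, Y'.exp = b2 → Hval Y' X ≤ Hval Y X)

/-- `U_O^m`: uniform distribution on the odd numbers `{1, 3, …, 2m−1}` (as a pmf). -/
noncomputable def UO (m : ℕ) : ℕ → ℝ := fun n =>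
  if Odd n ∧ n < 2 * m then (m : ℝ)⁻¹ else 0

/-- `U_E^m`: uniform distribution on the even numbers `{0, 2, …, 2m}` (as a pmf). -/
noncomputable def UE (m : ℕ) : ℕ → ℝ := fun n =>
  if Even n ∧ n ≤ 2 * m then ((m : ℝ) + 1)⁻¹ else 0

/-- `U_{O↑1}^m`: uniform distribution on the even numbers `{2, 4, …, 2m−2}` (as a pmf). -/
noncomputable def UOup (m : ℕ) : ℕ → ℝ := fun n =>
  if Even n ∧ 0 < n ∧ n ≤ 2 * m - 2 then ((m : ℝ) - 1)⁻¹ else 0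

/-- `δ_j`: the point mass at `j` (as a pmf). -/
noncomputable def deltaFn (j : ℕ) : ℕ → ℝ := fun n => if n = j then 1 else 0

/-- `W_j^m = (1/(2m))·δ_0 + Σ_{i=1}^{j−1}(1/m)·δ_{2i} + (1/(2m))·δ_{2j}
      + Σ_{i=j+1}^{m}(1/m)·δ_{2i−1}` (as a pmf). -/
noncomputable def Wfn (j m : ℕ) : ℕ → ℝ := fun n =>
  if n = 0 ∨ n = 2 * j then (2 * (m : ℝ))⁻¹
  else if Even n ∧ n < 2 * j then (m : ℝ)⁻¹
  else if Odd n ∧ 2 * j < n ∧ n < 2 * m then (m : ℝ)⁻¹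
  else 0

/-- `V_j^m = Σ_{i=1}^{j−1}(2/(2m+1))·δ_{2i−1} + (1/(2m+1))·δ_{2j−1}
      + Σ_{i=j}^{m}(2/(2m+1))·δ_{2i}` (as a pmf). -/
noncomputable def Vfn (j m : ℕ) : ℕ → ℝ := fun n =>
  if n = 2 * j - 1 then (2 * (m : ℝ) + 1)⁻¹
  else if Odd n ∧ n < 2 * j - 1 then 2 * (2 * (m : ℝ) + 1)⁻¹
  else if Even n ∧ 2 * j ≤ n ∧ n ≤ 2 * m then 2 * (2 * (m : ℝ) + 1)⁻¹
  else 0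


namespace APA
open Finset

lemma sump (ξ : Strategy) : Summable ξ.p := ξ.total.summable

lemma tsump (ξ : Strategy) : ∑' n, ξ.p n = 1 := ξ.total.tsum_eq

lemma partial_le_one (ξ : Strategy) (s : Finset ℕ) : ∑ i ∈ s, ξ.p i ≤ 1 := by
  have := Summable.sum_le_tsum s (fun i _ => ξ.nonneg i) (sump ξ)
  rwa [tsump] at this

/-- mid-cdf -/
noncomputable def Tmid (ξ : Strategy) (j : ℕ) : ℝ :=
  (∑ i ∈ Finset.range j, ξ.p i) + ξ.p j / 2

lemma Tmid_nonneg (ξ : Strategy) (j : ℕ) : 0 ≤ Tmid ξ j := by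
  have h1 : 0 ≤ ∑ i ∈ Finset.range j, ξ.p i := sum_nonneg fun i _ => ξ.nonneg i
  have h2 := ξ.nonneg j
  unfold Tmid; linarith

lemma Tmid_le_one (ξ : Strategy) (j : ℕ) : Tmid ξ j ≤ 1 := by
  have h1 := partial_le_one ξ (range (j+1))
  rw [Finset.sum_range_succ] at h1
  have h2 := ξ.nonneg j
  unfold Tmid; linarith

lemma summable_weight (ξ : Strategy) {c : ℕ → ℝ} (h : ∀ n, |c n| ≤ 1) :
    Summable fun n => ξ.p n * c n := by
  refine Summable.of_abs (Summable.of_nonneg_of_le (fun n => abs_nonneg _) (fun n => ?_) (sump ξ))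
  rw [abs_mul, abs_of_nonneg (ξ.nonneg n)]
  calc ξ.p n * |c n| ≤ ξ.p n * 1 := by
        exact mul_le_mul_of_nonneg_left (h n) (ξ.nonneg n)
    _ = ξ.p n := mul_one _

lemma hasSum_tail (ξ : Strategy) (k : ℕ) :
    HasSum (fun n => if k < n then ξ.p n else 0)
      (1 - ∑ i ∈ Finset.range (k+1), ξ.p i) := by
  have h1 : HasSum (fun n => if n < k + 1 then ξ.p n else 0)
      (∑ i ∈ Finset.range (k+1), (fun n => if n < k + 1 then ξ.p n else 0) i) := by
    apply hasSum_sum_of_ne_finset_zero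
    intro n hn
    simp only [Finset.mem_range] at hn
    simp [hn]
  have h2 : (∑ i ∈ Finset.range (k+1), (fun n => if n < k + 1 then ξ.p n else 0) i)
      = ∑ i ∈ Finset.range (k+1), ξ.p i := by
    apply Finset.sum_congr rfl; intro i hi
    simp only [Finset.mem_range] at hi
    simp [hi]
  rw [h2] at h1
  have := ξ.total.sub h1
  convert this using 1
  · rfl
  funext n
  by_cases hn : k < n
  · rw [if_pos hn, if_neg (by omega : ¬ n < k + 1)]; ring
  · rw [if_neg hn, if_pos (by omega : n < k + 1)]; ring

lemma summable_tail (ξ : Strategy) (k : ℕ) :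
    Summable (fun n => if k < n then ξ.p n else 0) := (hasSum_tail ξ k).summable

lemma tsum_tail (ξ : Strategy) (k : ℕ) :
    ∑' n, (if k < n then ξ.p n else 0) = 1 - ∑ i ∈ Finset.range (k+1), ξ.p i :=
  (hasSum_tail ξ k).tsum_eq

end APA

namespace APA
open Finset

lemma summable_pair (ξ η : Strategy) :
    Summable (fun p : ℕ × ℕ => ξ.p p.1 * η.p p.2) :=
  (sump ξ).mul_of_nonneg (sump η) (fun n => ξ.nonneg n) (fun n => η.nonneg n)

lemma summable_fG (ξ η : Strategy) :
    Summable (fun p : ℕ × ℕ => if p.2 < p.1 then ξ.p p.1 * η.p p.2 else 0) := by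
  refine Summable.of_nonneg_of_le (fun p => ?_) (fun p => ?_) (summable_pair ξ η)
  · split
    · exact mul_nonneg (ξ.nonneg _) (η.nonneg _)
    · exact le_rfl
  · split
    · exact le_rfl
    · exact mul_nonneg (ξ.nonneg _) (η.nonneg _)

lemma prGT_eq (ξ η : Strategy) :
    prGT ξ η = ∑' k, η.p k * (1 - ∑ i ∈ Finset.range (k+1), ξ.p i) := by
  have hf := summable_fG ξ η
  have h1 : prGT ξ η = ∑' p : ℕ × ℕ, (if p.2 < p.1 then ξ.p p.1 * η.p p.2 else 0) := by
    rw [Summable.tsum_prod' hf (fun n => by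
      apply summable_of_ne_finset_zero (s := Finset.range n)
      intro k hk; simp only [Finset.mem_range] at hk; simp [hk])]
    unfold prGT
    congr 1; funext n
    rw [tsum_eq_sum (s := Finset.range n) (f := fun k => if k < n then ξ.p n * η.p k else 0)
      (by intro k hk; simp only [Finset.mem_range] at hk; simp [hk])]
    rw [Finset.mul_sum]
    apply Finset.sum_congr rfl; intro k hk
    simp only [Finset.mem_range] at hk
    simp [hk]
  have h2 : ∑' p : ℕ × ℕ, (if p.2 < p.1 then ξ.p p.1 * η.p p.2 else 0)
      = ∑' p : ℕ × ℕ, (if p.1 < p.2 then ξ.p p.2 * η.p p.1 else 0) := by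
    rw [← (Equiv.prodComm ℕ ℕ).tsum_eq
      (fun p : ℕ × ℕ => if p.2 < p.1 then ξ.p p.1 * η.p p.2 else 0)]
    rfl
  have hf2 : Summable (fun p : ℕ × ℕ => if p.1 < p.2 then ξ.p p.2 * η.p p.1 else 0) := by
    have := ((Equiv.prodComm ℕ ℕ).summable_iff
      (f := fun p : ℕ × ℕ => if p.2 < p.1 then ξ.p p.1 * η.p p.2 else 0)).2 hf
    exact this
  have hinner : ∀ k : ℕ, Summable (fun n => if k < n then ξ.p n * η.p k else 0) := by
    intro k
    apply ((summable_tail ξ k).mul_right (η.p k)).congr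
    intro n; split <;> simp
  rw [h1, h2, Summable.tsum_prod' hf2 hinner]
  congr 1; funext k
  have h3 : ∑' n, (if k < n then ξ.p n * η.p k else 0)
      = ∑' n, (if k < n then ξ.p n else 0) * η.p k := by
    congr 1; funext n; split <;> simp
  rw [h3, tsum_mul_right, tsum_tail]
  ring

lemma prOne (ξ η : Strategy) : prGT ξ η + prGT η ξ + prEq ξ η = 1 := by
  have hGT : prGT η ξ = ∑' k, η.p k * ∑ i ∈ Finset.range k, ξ.p i := rfl
  have hEq : prEq ξ η = ∑' k, η.p k * ξ.p k := by
    unfold prEq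
    rw [← (Equiv.refl ℕ).tsum_eq]
    congr 1; funext k; exact mul_comm _ _
  have s1 : Summable (fun k => η.p k * (1 - ∑ i ∈ Finset.range (k+1), ξ.p i)) := by
    apply summable_weight
    intro k
    have h1 := partial_le_one ξ (Finset.range (k+1))
    have h2 : (0:ℝ) ≤ ∑ i ∈ Finset.range (k+1), ξ.p i :=
      Finset.sum_nonneg fun i _ => ξ.nonneg i
    rw [abs_le]; constructor <;> linarith
  have s2 : Summable (fun k => η.p k * ∑ i ∈ Finset.range k, ξ.p i) := by
    apply summable_weight
    intro k
    have h1 := partial_le_one ξ (Finset.range k)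
    have h2 : (0:ℝ) ≤ ∑ i ∈ Finset.range k, ξ.p i :=
      Finset.sum_nonneg fun i _ => ξ.nonneg i
    rw [abs_le]; constructor <;> linarith
  have hple : ∀ k, ξ.p k ≤ 1 := by
    intro k
    have := partial_le_one ξ {k}
    simpa using this
  have s3 : Summable (fun k => η.p k * ξ.p k) := by
    apply summable_weight
    intro k
    rw [abs_of_nonneg (ξ.nonneg k)]
    exact hple k
  rw [prGT_eq ξ η, hGT, hEq, ← Summable.tsum_add s1 s2, ← Summable.tsum_add (s1.add s2) s3]
  have heq : (fun k => η.p k * (1 - ∑ i ∈ Finset.range (k+1), ξ.p i)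
      + η.p k * ∑ i ∈ Finset.range k, ξ.p i + η.p k * ξ.p k) = η.p := by
    funext k
    rw [Finset.sum_range_succ]
    ring
  rw [heq, tsump]

end APA

namespace APA
open Finset

lemma payoff_eq (v : ℝ) (ξ η : Strategy) :
    payoff v ξ η = v / 2 * (Hval ξ η + 1) - ξ.exp := by
  have h := prOne ξ η
  unfold payoff Hval
  have : prEq ξ η = 1 - prGT ξ η - prGT η ξ := by linarith
  rw [this]; ring

lemma Hval_swap (ξ η : Strategy) : Hval η ξ = - Hval ξ η := by
  unfold Hval; ring

lemma summable_Hterm (ξ η : Strategy) :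
    Summable fun k => η.p k * (1 - 2 * Tmid ξ k) := by
  apply summable_weight
  intro k
  have h1 := Tmid_nonneg ξ k
  have h2 := Tmid_le_one ξ k
  rw [abs_le]; constructor <;> linarith

lemma Hval_formula (ξ η : Strategy) :
    Hval ξ η = ∑' k, η.p k * (1 - 2 * Tmid ξ k) := by
  have s1 : Summable (fun k => η.p k * (1 - ∑ i ∈ Finset.range (k+1), ξ.p i)) := by
    apply summable_weight
    intro k
    have h1 := partial_le_one ξ (Finset.range (k+1))
    have h2 : (0:ℝ) ≤ ∑ i ∈ Finset.range (k+1), ξ.p i :=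
      Finset.sum_nonneg fun i _ => ξ.nonneg i
    rw [abs_le]; constructor <;> linarith
  have s2 : Summable (fun k => η.p k * ∑ i ∈ Finset.range k, ξ.p i) := by
    apply summable_weight
    intro k
    have h1 := partial_le_one ξ (Finset.range k)
    have h2 : (0:ℝ) ≤ ∑ i ∈ Finset.range k, ξ.p i :=
      Finset.sum_nonneg fun i _ => ξ.nonneg i
    rw [abs_le]; constructor <;> linarith
  have hGT : prGT η ξ = ∑' k, η.p k * ∑ i ∈ Finset.range k, ξ.p i := rfl
  unfold Hval
  rw [prGT_eq ξ η, hGT, ← Summable.tsum_sub s1 s2]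
  congr 1; funext k
  rw [Finset.sum_range_succ]
  unfold Tmid
  ring

end APA

namespace APA
open Finset

/-- point mass strategy -/
noncomputable def deltaS (j : ℕ) : Strategy where
  p := deltaFn j
  nonneg := fun n => by unfold deltaFn; split <;> norm_num
  total := by
    have : HasSum (fun n => if n = j then (1:ℝ) else 0) 1 := hasSum_ite_eq j 1
    exact this
  finExp := by
    apply summable_of_ne_finset_zero (s := {j})
    intro n hn
    simp only [Finset.mem_singleton] at hn
    simp [deltaFn, hn]

@[simp] lemma deltaS_p (j n : ℕ) : (deltaS j).p n = if n = j then 1 else 0 := rfl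

lemma deltaS_exp (j : ℕ) : (deltaS j).exp = j := by
  unfold Strategy.exp
  rw [tsum_eq_single j (fun n hn => by simp [deltaFn, hn, deltaS])]
  simp [deltaFn, deltaS]

lemma prGT_deltaS (j : ℕ) (η : Strategy) :
    prGT (deltaS j) η = ∑ i ∈ Finset.range j, η.p i := by
  unfold prGT
  rw [tsum_eq_single j (fun n hn => by simp [deltaFn, hn, deltaS])]
  simp [deltaFn, deltaS]

lemma prEq_deltaS (j : ℕ) (η : Strategy) : prEq (deltaS j) η = η.p j := by
  unfold prEq
  rw [tsum_eq_single j (fun n hn => by simp [deltaFn, hn, deltaS])]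
  simp [deltaFn, deltaS]

lemma payoff_deltaS (v : ℝ) (j : ℕ) (η : Strategy) :
    payoff v (deltaS j) η = v * Tmid η j - j := by
  unfold payoff Tmid
  rw [prGT_deltaS, prEq_deltaS, deltaS_exp]
  ring

lemma sum_ite_odd (c : ℝ) : ∀ N : ℕ,
    ∑ n ∈ Finset.range N, (if Odd n then c else 0) = ((N/2 : ℕ) : ℝ) * c := by
  intro N
  induction N with
  | zero => simp
  | succ N ih =>
    rw [Finset.sum_range_succ, ih]
    rcases Nat.even_or_odd N with hN | hN
    · have h1 : ¬ Odd N := Nat.not_odd_iff_even.2 hN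
      obtain ⟨t, ht⟩ := hN
      have h2 : (N+1)/2 = N/2 := by omega
      rw [if_neg h1, h2]; ring
    · obtain ⟨t, ht⟩ := hN
      have h2 : (N+1)/2 = N/2 + 1 := by omega
      rw [if_pos ⟨t, ht⟩, h2]
      push_cast
      ring

lemma sum_ite_odd_mul (c : ℝ) : ∀ N : ℕ,
    ∑ n ∈ Finset.range N, (if Odd n then (n:ℝ) * c else 0)
      = ((N/2 : ℕ) : ℝ)^2 * c := by
  intro N
  induction N with
  | zero => simp
  | succ N ih =>
    rw [Finset.sum_range_succ, ih]
    rcases Nat.even_or_odd N with hN | hN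
    · have h1 : ¬ Odd N := Nat.not_odd_iff_even.2 hN
      obtain ⟨t, ht⟩ := hN
      have h2 : (N+1)/2 = N/2 := by omega
      rw [if_neg h1, h2]; ring
    · obtain ⟨t, ht⟩ := hN
      have h2 : (N+1)/2 = N/2 + 1 := by omega
      have h3 : N/2 = t := by omega
      rw [if_pos ⟨t, ht⟩, h2, h3, ht]
      push_cast
      ring

lemma UO_nonneg (m n : ℕ) : 0 ≤ UO m n := by
  unfold UO; split
  · positivity
  · exact le_rfl

lemma UO_vanish (m : ℕ) : ∀ n ∉ Finset.range (2*m), UO m n = 0 := by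
  intro n hn
  simp only [Finset.mem_range] at hn
  simp [UO, hn]

lemma UO_sum (m : ℕ) (hm : 1 ≤ m) : ∑ n ∈ Finset.range (2*m), UO m n = 1 := by
  have : ∑ n ∈ Finset.range (2*m), UO m n
      = ∑ n ∈ Finset.range (2*m), (if Odd n then (m:ℝ)⁻¹ else 0) := by
    apply Finset.sum_congr rfl
    intro n hn
    simp only [Finset.mem_range] at hn
    unfold UO
    by_cases h : Odd n <;> simp [h, hn]
  rw [this, sum_ite_odd]
  have h2 : (2*m)/2 = m := by omega
  rw [h2]
  field_simp

lemma UO_hasSum (m : ℕ) (hm : 1 ≤ m) : HasSum (UO m) 1 := by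
  have : HasSum (UO m) (∑ n ∈ Finset.range (2*m), UO m n) := hasSum_sum_of_ne_finset_zero (UO_vanish m)
  rwa [UO_sum m hm] at this

/-- the strategy U_O^m -/
noncomputable def UOS (m : ℕ) (hm : 1 ≤ m) : Strategy where
  p := UO m
  nonneg := UO_nonneg m
  total := UO_hasSum m hm
  finExp := by
    apply summable_of_ne_finset_zero (s := Finset.range (2*m))
    intro n hn
    rw [UO_vanish m n hn, mul_zero]

lemma UOS_exp (m : ℕ) (hm : 1 ≤ m) : (UOS m hm).exp = m := by
  show ∑' n : ℕ, (n:ℝ) * UO m n = m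
  have hv : ∀ n ∉ Finset.range (2*m), (n:ℝ) * UO m n = 0 := by
    intro n hn; rw [UO_vanish m n hn, mul_zero]
  rw [tsum_eq_sum (s := Finset.range (2*m)) hv]
  have : ∑ n ∈ Finset.range (2*m), (n:ℝ) * UO m n
      = ∑ n ∈ Finset.range (2*m), (if Odd n then (n:ℝ) * (m:ℝ)⁻¹ else 0) := by
    apply Finset.sum_congr rfl
    intro n hn
    simp only [Finset.mem_range] at hn
    unfold UO
    by_cases h : Odd n <;> simp [h, hn]
  rw [this, sum_ite_odd_mul]
  have h2 : (2*m)/2 = m := by omega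
  rw [h2]
  have hm0 : (m:ℝ) ≠ 0 := by positivity
  field_simp

lemma UO_pair_le (m : ℕ) (n : ℕ) : UO m n + UO m (n+1) ≤ (m:ℝ)⁻¹ := by
  have hnn : (0:ℝ) ≤ (m:ℝ)⁻¹ := by positivity
  rcases Nat.even_or_odd n with hN | hN
  · have h1 : ¬ Odd n := Nat.not_odd_iff_even.2 hN
    have : UO m n = 0 := by simp [UO, h1]
    rw [this, zero_add]
    unfold UO; split <;> simp [hnn]
  · have h1 : ¬ Odd (n+1) := by
      rcases hN with ⟨t, ht⟩
      exact Nat.not_odd_iff_even.2 ⟨t+1, by omega⟩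
    have : UO m (n+1) = 0 := by simp [UO, h1]
    rw [this, add_zero]
    unfold UO; split <;> simp [hnn]

lemma Tmid_UO_le (m : ℕ) (hm : 1 ≤ m) (n : ℕ) :
    Tmid (UOS m hm) n ≤ (n:ℝ) / (2*m) := by
  have key : ∀ n : ℕ, 2 * (∑ i ∈ Finset.range n, UO m i) + UO m n ≤ (n:ℝ) * (m:ℝ)⁻¹ := by
    intro n
    induction n with
    | zero => simp [UO]
    | succ n ih =>
      rw [Finset.sum_range_succ]
      have := UO_pair_le m n
      push_cast
      nlinarith [UO_nonneg m n]
  have h := key n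
  have hm0 : (0:ℝ) < (m:ℝ) := by exact_mod_cast Nat.pos_of_ne_zero (by omega)
  have : Tmid (UOS m hm) n = ((2 * (∑ i ∈ Finset.range n, UO m i) + UO m n)) / 2 := by
    unfold Tmid UOS
    ring
  rw [this]
  rw [div_le_div_iff₀ (by norm_num) (by positivity)]
  calc (2 * ∑ i ∈ Finset.range n, UO m i + UO m n) * (2*(m:ℝ))
      ≤ ((n:ℝ) * (m:ℝ)⁻¹) * (2*(m:ℝ)) := by
        apply mul_le_mul_of_nonneg_right h (by positivity)
    _ = (n:ℝ) * 2 := by field_simp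
end APA

namespace APA
open Finset

/-- mixture of two strategies -/
noncomputable def mixS (β : ℝ) (h0 : 0 ≤ β) (h1 : β ≤ 1) (ξ η : Strategy) : Strategy where
  p := fun n => (1-β) * ξ.p n + β * η.p n
  nonneg := fun n => by
    have := ξ.nonneg n; have := η.nonneg n
    show 0 ≤ (1-β) * ξ.p n + β * η.p n
    nlinarith
  total := by
    have h := (ξ.total.mul_left (1-β)).add (η.total.mul_left β)
    simpa using h
  finExp := by
    have h := ((ξ.finExp.mul_left (1-β)).add (η.finExp.mul_left β))
    apply h.congr
    intro n; ring

lemma mixS_exp (β : ℝ) (h0 : 0 ≤ β) (h1 : β ≤ 1) (ξ η : Strategy) :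
    (mixS β h0 h1 ξ η).exp = (1-β) * ξ.exp + β * η.exp := by
  have h2 := ((ξ.finExp.hasSum.mul_left (1-β)).add (η.finExp.hasSum.mul_left β))
  have h3 : (fun n : ℕ => (1-β) * ((n:ℝ) * ξ.p n) + β * ((n:ℝ) * η.p n))
      = fun n : ℕ => (n:ℝ) * (mixS β h0 h1 ξ η).p n := by
    funext n
    show _ = (n:ℝ) * ((1-β) * ξ.p n + β * η.p n)
    ring
  rw [h3] at h2
  exact h2.tsum_eq

lemma mixS_Tmid (β : ℝ) (h0 : 0 ≤ β) (h1 : β ≤ 1) (ξ η : Strategy) (n : ℕ) :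
    Tmid (mixS β h0 h1 ξ η) n = (1-β) * Tmid ξ n + β * Tmid η n := by
  unfold Tmid mixS
  simp only [Finset.sum_add_distrib, ← Finset.mul_sum]
  ring

end APA

namespace APA
open Finset

lemma hasSum_single (f : ℕ → ℝ) (j : ℕ) :
    HasSum (fun n => if n = j then f n else 0) (f j) := by
  have heq : (fun n => if n = j then f n else 0) = fun n => if n = j then f j else 0 := by
    funext n
    by_cases h : n = j
    · subst h; simp
    · simp [h]
  rw [heq]
  exact hasSum_ite_eq j (f j)

noncomputable def w (j n : ℕ) : ℝ := if j < n then 1 else if n = j then 1/2 else 0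

lemma w_nonneg (j n : ℕ) : 0 ≤ w j n := by
  unfold w; split
  · norm_num
  · split <;> norm_num

lemma w_le_one (j n : ℕ) : w j n ≤ 1 := by
  unfold w; split
  · norm_num
  · split <;> norm_num

lemma summable_w (ξ : Strategy) (j : ℕ) : Summable fun n => ξ.p n * w j n := by
  apply summable_weight
  intro n
  rw [abs_le]
  have h1 := w_nonneg j n
  have h2 := w_le_one j n
  constructor <;> linarith

lemma one_sub_Tmid (ξ : Strategy) (j : ℕ) :
    1 - Tmid ξ j = ∑' n, ξ.p n * w j n := by
  have hpt : (fun n => ξ.p n * w j n)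
      = fun n => (if j < n then ξ.p n else 0) + (if n = j then ξ.p n / 2 else 0) := by
    funext n
    unfold w
    rcases lt_trichotomy j n with h | h | h
    · rw [if_pos h, if_pos h, if_neg (by omega)]; ring
    · rw [if_neg (by omega), if_pos h.symm, if_neg (by omega), if_pos h.symm]; ring
    · rw [if_neg (by omega), if_neg (by omega), if_neg (by omega), if_neg (by omega)]; ring
  have h2 := (hasSum_tail ξ j).add (hasSum_single (fun n => ξ.p n / 2) j)
  rw [hpt, h2.tsum_eq, Finset.sum_range_succ]
  unfold Tmid
  ring

lemma wsum_eq (n : ℕ) : ∀ N : ℕ, ∑ j ∈ Finset.range N, w j n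
    = ((min N n : ℕ) : ℝ) + (if n < N then (1/2:ℝ) else 0) := by
  intro N
  induction N with
  | zero => simp
  | succ N ih =>
    rw [Finset.sum_range_succ, ih]
    rcases lt_trichotomy N n with h | h | h
    · have hw : w N n = 1 := by unfold w; rw [if_pos h]
      have h1 : min (N+1) n = min N n + 1 := by omega
      have h2 : ¬ n < N := by omega
      have h3 : ¬ n < N + 1 := by omega
      rw [hw, h1, if_neg h2, if_neg h3]
      push_cast; ring
    · have hw : w N n = 1/2 := by unfold w; rw [if_neg (by omega), if_pos h.symm]
      have h1 : min (N+1) n = min N n := by omega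
      have h2 : ¬ n < N := by omega
      have h3 : n < N + 1 := by omega
      rw [hw, h1, if_neg h2, if_pos h3]
      ring
    · have hw : w N n = 0 := by unfold w; rw [if_neg (by omega), if_neg (by omega)]
      have h1 : min (N+1) n = min N n := by omega
      have h2 : n < N := by omega
      have h3 : n < N + 1 := by omega
      rw [hw, h1, if_pos h2, if_pos h3]
      ring

lemma wsum_le (n N : ℕ) : ∑ j ∈ Finset.range N, w j n ≤ (n : ℝ) + 1/2 := by
  rw [wsum_eq]
  have h1 : ((min N n : ℕ) : ℝ) ≤ (n : ℝ) := by exact_mod_cast Nat.min_le_right N n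
  split <;> linarith

lemma wsum_nonneg (n N : ℕ) : 0 ≤ ∑ j ∈ Finset.range N, w j n :=
  Finset.sum_nonneg fun j _ => w_nonneg j n

lemma summable_exp_half (ξ : Strategy) : Summable fun n => ξ.p n * ((n:ℝ) + 1/2) := by
  apply Summable.congr (ξ.finExp.add ((sump ξ).mul_left (1/2)))
  intro n; ring

lemma tsum_exp_half (ξ : Strategy) : ∑' n, ξ.p n * ((n:ℝ) + 1/2) = ξ.exp + 1/2 := by
  have h2 := ξ.finExp.hasSum.add (ξ.total.mul_left (1/2))
  have h3 : (fun n : ℕ => (n:ℝ) * ξ.p n + (1/2) * ξ.p n) = fun n => ξ.p n * ((n:ℝ) + 1/2) := by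
    funext n; ring
  rw [h3] at h2
  rw [h2.tsum_eq]
  show ξ.exp + 1/2 * 1 = ξ.exp + 1/2
  ring

lemma sum_one_sub_Tmid_le (ξ : Strategy) (N : ℕ) :
    ∑ j ∈ Finset.range N, (1 - Tmid ξ j) ≤ ξ.exp + 1/2 := by
  have hs : Summable fun n => ξ.p n * ∑ j ∈ Finset.range N, w j n := by
    refine Summable.of_nonneg_of_le (fun n => mul_nonneg (ξ.nonneg n) (wsum_nonneg n N))
      (fun n => mul_le_mul_of_nonneg_left (wsum_le n N) (ξ.nonneg n)) (summable_exp_half ξ)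
  calc ∑ j ∈ Finset.range N, (1 - Tmid ξ j)
      = ∑ j ∈ Finset.range N, ∑' n, ξ.p n * w j n :=
        Finset.sum_congr rfl (fun j _ => one_sub_Tmid ξ j)
    _ = ∑' n, ∑ j ∈ Finset.range N, ξ.p n * w j n :=
        (Summable.tsum_finsetSum (fun j _ => summable_w ξ j)).symm
    _ = ∑' n, ξ.p n * ∑ j ∈ Finset.range N, w j n := by
        congr 1; funext n; rw [Finset.mul_sum]
    _ ≤ ∑' n, ξ.p n * ((n:ℝ) + 1/2) :=
        Summable.tsum_le_tsum (fun n => mul_le_mul_of_nonneg_left (wsum_le n N) (ξ.nonneg n))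
          hs (summable_exp_half ξ)
    _ = ξ.exp + 1/2 := tsum_exp_half ξ

end APA

set_option maxHeartbeats 2000000 in
/-- Lemma 7.1: necessary conditions for an equilibrium with
`E(X) = m ≥ 1` and `E(Y) = b ∈ (0, m)`. -/
theorem allpay_lemma71 (v1 v2 : ℝ) (hv1 : 0 < v1) (hv2 : 0 < v2)
    (m : ℕ) (hm : 1 ≤ m) (b : ℝ) (hb0 : 0 < b) (hbm : b < (m : ℝ))
    (X Y : Strategy) (hX : X.exp = (m : ℝ)) (hY : Y.exp = b)
    (h : IsNashAPA v1 v2 X Y) :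
    (m : ℝ) = v2 / 2 ∧ IsNashLotto (m : ℝ) b X Y ∧ (∀ n, X.p n = UO m n) := by
  classical
  open APA in
  obtain ⟨hBR1, hBR2⟩ := h
  have hm0 : (0:ℝ) < (m:ℝ) := by exact_mod_cast (by omega : 0 < m)
  -- Step 1: Lotto equilibrium
  have hLotto : IsNashLotto (m:ℝ) b X Y := by
    refine ⟨hX, hY, ?_, ?_⟩
    · intro X' hX'
      have hle := hBR1 X'
      rw [payoff_eq v1 X' Y, payoff_eq v1 X Y, hX, hX'] at hle
      nlinarith [hle, hv1]
    · intro Y' hY'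
      have hle := hBR2 Y'
      rw [payoff_eq v2 Y' X, payoff_eq v2 Y X, hY, hY'] at hle
      nlinarith [hle, hv2]
  -- helper: linear tsum
  have tsum_lin : ∀ (ξ : Strategy) (a c : ℝ),
      HasSum (fun k : ℕ => ξ.p k * (a + c * k)) (a + c * ξ.exp) := by
    intro ξ a c
    have h2 := (ξ.total.mul_left a).add (ξ.finExp.hasSum.mul_left c)
    have h3 : (fun n : ℕ => a * ξ.p n + c * ((n:ℝ) * ξ.p n))
        = fun k : ℕ => ξ.p k * (a + c * k) := by funext n; ring
    rw [h3] at h2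
    have h4 : a + c * ξ.exp = a * 1 + c * ∑' (n : ℕ), (n:ℝ) * ξ.p n := by
      unfold Strategy.exp; ring
    rw [h4]; exact h2
  -- Step 2: value of Hval X Y
  have hH : Hval X Y = 1 - b / m := by
    have hge : 1 - b/m ≤ Hval X Y := by
      have h1 := hLotto.2.2.1 (UOS m hm) (UOS_exp m hm)
      have hs1 : HasSum (fun k : ℕ => Y.p k * (1 + (-(1/m)) * k)) (1 + (-(1/m)) * b) := by
        have := tsum_lin Y 1 (-(1/m)); rwa [hY] at this
      have h2 : 1 - b/m ≤ Hval (UOS m hm) Y := by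
        rw [Hval_formula]
        have hpt : ∀ k : ℕ, Y.p k * (1 + (-(1/m)) * k)
            ≤ Y.p k * (1 - 2 * Tmid (UOS m hm) k) := by
          intro k
          apply mul_le_mul_of_nonneg_left _ (Y.nonneg k)
          have h3 := Tmid_UO_le m hm k
          have h4 : 2 * Tmid (UOS m hm) k ≤ (k:ℝ)/m := by
            have hne : (m:ℝ) ≠ 0 := ne_of_gt hm0
            have h40 : 2 * ((k:ℝ)/(2*(m:ℝ))) = (k:ℝ)/m := by field_simp
            linarith [h3]
          have h5 : (1:ℝ) + (-(1/m)) * k = 1 - (k:ℝ)/m := by ring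
          rw [h5]
          linarith
        have := Summable.tsum_le_tsum hpt hs1.summable (summable_Hterm (UOS m hm) Y)
        rw [hs1.tsum_eq] at this
        have : (1:ℝ) + (-(1/m)) * b ≤ _ := this
        calc 1 - b/m = 1 + (-(1/m)) * b := by ring
          _ ≤ _ := this
      linarith
    have hle : Hval X Y ≤ 1 - b/m := by
      have hβ0 : (0:ℝ) ≤ b/m := by positivity
      have hβ1 : b/m ≤ 1 := by rw [div_le_one hm0]; linarith
      set β := b/m with hβ
      set Y0 := mixS β hβ0 hβ1 (deltaS 0) (UOS m hm) with hY0
      have hY0exp : Y0.exp = b := by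
        rw [hY0, mixS_exp, deltaS_exp, UOS_exp]
        push_cast
        rw [hβ]
        field_simp
        ring
      have h1 := hLotto.2.2.2 Y0 hY0exp
      -- lower bound on Hval Y0 X
      have hs1 : HasSum (fun n : ℕ => X.p n * ((2*β - 1) + (-(β/m)) * n))
          ((2*β - 1) + (-(β/m)) * m) := by
        have := tsum_lin X (2*β - 1) (-(β/m)); rwa [hX] at this
      have h2 : β - 1 ≤ Hval Y0 X := by
        rw [Hval_formula]
        have hpt : ∀ n : ℕ, X.p n * ((2*β - 1) + (-(β/m)) * n)
            ≤ X.p n * (1 - 2 * Tmid Y0 n) := by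
          intro n
          apply mul_le_mul_of_nonneg_left _ (X.nonneg n)
          have h3 : Tmid Y0 n = (1-β) * Tmid (deltaS 0) n + β * Tmid (UOS m hm) n := by
            rw [hY0]; exact mixS_Tmid β hβ0 hβ1 _ _ n
          have h4 := Tmid_le_one (deltaS 0) n
          have h5 := Tmid_UO_le m hm n
          have h6 : β * Tmid (UOS m hm) n ≤ β * ((n:ℝ)/(2*m)) :=
            mul_le_mul_of_nonneg_left h5 hβ0
          have h7 : (1-β) * Tmid (deltaS 0) n ≤ (1-β) * 1 :=
            mul_le_mul_of_nonneg_left h4 (by linarith)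
          have h8 : β * ((n:ℝ)/(2*m)) = (β/m) * n / 2 := by ring
          have h9 : Tmid Y0 n ≤ (1-β) + (β/m) * n / 2 := by
            rw [h3]; rw [h8] at h6; linarith
          nlinarith [h9]
        have := Summable.tsum_le_tsum hpt hs1.summable (summable_Hterm Y0 X)
        rw [hs1.tsum_eq] at this
        have hval : (2*β - 1) + (-(β/m)) * m = β - 1 := by
          field_simp
          ring
        rw [hval] at this
        exact this
      have h10 : β - 1 ≤ - Hval X Y := by
        rw [← Hval_swap X Y]
        exact le_trans h2 h1
      rw [hβ] at h10
      linarith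
    linarith
  -- Step 3: payoff of player 2
  have hM2 : payoff v2 Y X = v2 * b / (2*m) - b := by
    rw [payoff_eq v2 Y X, Hval_swap, hH, hY]
    ring
  -- deviation constraints
  have hTle : ∀ j : ℕ, v2 * Tmid X j - j ≤ v2 * b / (2*m) - b := by
    intro j
    have := hBR2 (deltaS j)
    rwa [payoff_deltaS, hM2] at this
  -- E2 ≥ 0 hence v2 ≥ 2m
  have hE2nonneg : 0 ≤ v2 * b / (2*m) - b := by
    have h0 := hTle 0
    have h1 := Tmid_nonneg X 0
    have : (0:ℝ) ≤ v2 * Tmid X 0 - (0:ℕ) := by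
      push_cast
      nlinarith [mul_nonneg hv2.le h1]
    linarith
  have hv2ge : 2*(m:ℝ) ≤ v2 := by
    have h1 : 2*(m:ℝ) * b ≤ v2 * b := by
      have h2 : b ≤ v2 * b / (2*m) := by linarith
      rw [le_div_iff₀ (by positivity)] at h2
      linarith
    nlinarith [h1, hb0]
  -- upper bound: v2 ≤ 2m
  have hsumjnat : ∑ j ∈ Finset.range (2*m+1), j = m * (2*m+1) := by
    have h0 := Finset.sum_range_id_mul_two (2*m+1)
    have h1 : (∑ j ∈ Finset.range (2*m+1), j) * 2 = (m * (2*m+1)) * 2 := by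
      rw [h0]
      have h2 : 2*m+1-1 = 2*m := by omega
      rw [h2]; ring
    exact Nat.eq_of_mul_eq_mul_right (by norm_num) h1
  have hsumj : ∑ j ∈ Finset.range (2*m+1), (j:ℝ) = (m:ℝ) * (2*(m:ℝ)+1) := by
    rw [← Nat.cast_sum, hsumjnat]
    push_cast
    ring
  have S8 : ∑ j ∈ Finset.range (2*m+1), (1 - Tmid X j) ≤ (m:ℝ) + 1/2 := by
    have := sum_one_sub_Tmid_le X (2*m+1)
    rwa [hX] at this
  set E2 := v2 * b / (2*m) - b with hE2def
  clear_value E2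
  have hlow : ∀ j ∈ Finset.range (2*m+1), 1 - (E2 + (j:ℝ))/v2 ≤ 1 - Tmid X j := by
    intro j _
    have h1 := hTle j
    have h2 : Tmid X j ≤ (E2 + (j:ℝ))/v2 := by
      rw [le_div_iff₀ hv2]
      nlinarith [h1]
    linarith
  have hval : ∑ j ∈ Finset.range (2*m+1), (1 - (E2 + (j:ℝ))/v2)
      = (2*(m:ℝ)+1) - ((2*(m:ℝ)+1)*E2 + (m:ℝ)*(2*(m:ℝ)+1))/v2 := by
    rw [Finset.sum_sub_distrib, Finset.sum_const, Finset.card_range,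
      ← Finset.sum_div, Finset.sum_add_distrib, Finset.sum_const, Finset.card_range, hsumj]
    push_cast
    ring
  have hchain : (2*(m:ℝ)+1) - ((2*(m:ℝ)+1)*E2 + (m:ℝ)*(2*(m:ℝ)+1))/v2 ≤ (m:ℝ) + 1/2 := by
    rw [← hval]
    exact le_trans (Finset.sum_le_sum hlow) S8
  have hv2le : v2 ≤ 2*(m:ℝ) := by
    have h1 : ((2*(m:ℝ)+1)*E2 + (m:ℝ)*(2*(m:ℝ)+1))/v2 ≥ (m:ℝ) + 1/2 := by linarith
    rw [ge_iff_le, le_div_iff₀ hv2] at h1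
    have h2 : v2 ≤ 2*E2 + 2*(m:ℝ) := by
      have hpos : (0:ℝ) < (m:ℝ) + 1/2 := by linarith
      by_contra hcon
      push_neg at hcon
      have h2a := mul_lt_mul_of_pos_left hcon hpos
      nlinarith [h1, h2a]
    -- substitute E2
    have hne : (2*(m:ℝ)) ≠ 0 := by positivity
    have hEb : E2 * (2*(m:ℝ)) = v2 * b - b*(2*(m:ℝ)) := by
      rw [hE2def, sub_mul, div_mul_cancel₀ _ hne]
    have hgen : ∀ v E mm bb : ℝ, 0 < mm → 0 < bb → bb < mm → v ≤ 2*E + 2*mm →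
        E * (2*mm) = v*bb - bb*(2*mm) → v ≤ 2*mm := by
      intro v E mm bb g1 g2 g3 g4 g5
      by_contra hcon
      push_neg at hcon
      have p1 := mul_le_mul_of_nonneg_right g4 g1.le
      have p2 := mul_pos (sub_pos.2 hcon) (sub_pos.2 g3)
      nlinarith [p1, p2, g5]
    exact hgen v2 E2 (m:ℝ) b hm0 hb0 hbm h2 hEb
  have hv2eq : v2 = 2*(m:ℝ) := le_antisymm hv2le hv2ge
  have hE2zero : E2 = 0 := by
    have hne : (2*(m:ℝ)) ≠ 0 := by positivity
    have hEb : E2 * (2*(m:ℝ)) = v2 * b - b*(2*(m:ℝ)) := by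
      rw [hE2def, sub_mul, div_mul_cancel₀ _ hne]
    rw [hv2eq] at hEb
    have h0 : E2 * (2*(m:ℝ)) = 0 := by rw [hEb]; ring
    rcases mul_eq_zero.1 h0 with h | h
    · exact h
    · exact absurd h hne
  -- T is pinned down
  have hT : ∀ j ∈ Finset.range (2*m+1), Tmid X j = (j:ℝ)/(2*m) := by
    have hd0 : ∀ j ∈ Finset.range (2*m+1), 0 ≤ (j:ℝ)/(2*(m:ℝ)) - Tmid X j := by
      intro j _
      have h1 := hTle j
      rw [hE2zero, hv2eq] at h1
      have h2 : Tmid X j ≤ (j:ℝ)/(2*(m:ℝ)) := by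
        rw [le_div_iff₀ (by positivity)]
        nlinarith [h1]
      linarith
    have hsum0 : ∑ j ∈ Finset.range (2*m+1), ((j:ℝ)/(2*(m:ℝ)) - Tmid X j) ≤ 0 := by
      have h1 : ∑ j ∈ Finset.range (2*m+1), ((j:ℝ)/(2*(m:ℝ)))
          = (m:ℝ) + 1/2 := by
        rw [← Finset.sum_div, hsumj, div_eq_iff (by positivity : (2*(m:ℝ)) ≠ 0)]
        ring
      have h2 : ∑ j ∈ Finset.range (2*m+1), Tmid X j ≥ (m:ℝ) + 1/2 := by
        have h3 : ∑ j ∈ Finset.range (2*m+1), (1 - Tmid X j)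
            = (2*(m:ℝ)+1) - ∑ j ∈ Finset.range (2*m+1), Tmid X j := by
          rw [Finset.sum_sub_distrib, Finset.sum_const, Finset.card_range]
          push_cast
          ring
        rw [h3] at S8
        linarith
      rw [Finset.sum_sub_distrib, h1]
      linarith
    have heq : ∑ j ∈ Finset.range (2*m+1), ((j:ℝ)/(2*(m:ℝ)) - Tmid X j) = 0 :=
      le_antisymm hsum0 (Finset.sum_nonneg hd0)
    intro j hj
    have := (Finset.sum_eq_zero_iff_of_nonneg hd0).1 heq j hj
    linarith [this]
  -- extract X = UO
  have hT2m : Tmid X (2*m) = 1 := by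
    have h0 := hT (2*m) (by simp)
    rw [h0]
    push_cast
    exact div_self (by positivity)
  have hx2m : X.p (2*m) = 0 ∧ ∑ i ∈ Finset.range (2*m), X.p i = 1 := by
    have h1 := partial_le_one X (Finset.range (2*m+1))
    rw [Finset.sum_range_succ] at h1
    have h2 : ∑ i ∈ Finset.range (2*m), X.p i + X.p (2*m)/2 = 1 := hT2m
    have h3 := X.nonneg (2*m)
    constructor <;> linarith
  have htail : ∀ n, 2*m ≤ n → X.p n = 0 := by
    intro n hn
    rcases Nat.eq_or_lt_of_le hn with hcase | hcase
    · rw [← hcase]; exact hx2m.1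
    have hnot : n ∉ Finset.range (2*m) := by simp; omega
    have hsub : insert n (Finset.range (2*m)) ⊆ Finset.range (n+1) := by
      intro k hk
      simp only [Finset.mem_insert, Finset.mem_range] at hk ⊢
      omega
    have h1 := Finset.sum_le_sum_of_subset_of_nonneg hsub (fun k _ _ => X.nonneg k)
    rw [Finset.sum_insert hnot, hx2m.2] at h1
    have h2 := partial_le_one X (Finset.range (n+1))
    have h3 := X.nonneg n
    linarith
  have hrec : ∀ j, j + 1 ≤ 2*m → X.p j + X.p (j+1) = (m:ℝ)⁻¹ := by
    intro j hj
    have h1 := hT j (by simp; omega)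
    have h2 := hT (j+1) (by simp; omega)
    unfold APA.Tmid at h1 h2
    rw [Finset.sum_range_succ] at h2
    have h3 : ((j:ℝ)+1)/(2*(m:ℝ)) - (j:ℝ)/(2*(m:ℝ)) = 1/(2*(m:ℝ)) := by
      rw [div_sub_div_same]
      norm_num
    push_cast at h2
    have h4 : X.p j + X.p (j+1)/2 - X.p j / 2 = 1/(2*(m:ℝ)) := by
      rw [← h3]
      linarith [h1, h2]
    rw [inv_eq_one_div]
    have h5 : 1/(m:ℝ) = 2 * (1/(2*(m:ℝ))) := by
      rw [mul_one_div, div_eq_div_iff (by positivity) (by positivity)]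
      ring
    rw [h5]
    linarith
  have hx0 : X.p 0 = 0 := by
    have h1 := hT 0 (by simp)
    unfold APA.Tmid at h1
    simp at h1
    linarith
  have hmain : ∀ n, X.p n = UO m n := by
    have haux : ∀ n, n < 2*m → X.p n = UO m n := by
      intro n
      induction n with
      | zero =>
        intro _
        rw [hx0]
        simp [UO]
      | succ n ih =>
        intro hlt
        have hn : n < 2*m := by omega
        have hXn := ih hn
        have hr := hrec n (by omega)
        rcases Nat.even_or_odd n with he | ho
        · have h1 : ¬ Odd n := Nat.not_odd_iff_even.2 he
          have h2 : Odd (n+1) := by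
            rcases he with ⟨t, ht⟩; exact ⟨t, by omega⟩
          have hUn : UO m n = 0 := by simp [UO, h1]
          have hUn1 : UO m (n+1) = (m:ℝ)⁻¹ := by simp [UO, h2, hlt]
          rw [hUn] at hXn
          rw [hUn1]
          linarith
        · have h2 : ¬ Odd (n+1) := by
            rcases ho with ⟨t, ht⟩
            exact Nat.not_odd_iff_even.2 ⟨t+1, by omega⟩
          have hUn : UO m n = (m:ℝ)⁻¹ := by simp [UO, ho, hn]
          have hUn1 : UO m (n+1) = 0 := by simp [UO, h2]
          rw [hUn] at hXn
          rw [hUn1]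
          linarith
    intro n
    by_cases hn : n < 2*m
    · exact haux n hn
    · rw [htail n (by omega)]
      simp [UO, hn]
  exact ⟨by push_cast at hv2eq ⊢; linarith, hLotto, hmain⟩
end

section
/- Let v1, v2 > 0, let m be a positive integer, let 0 < b ≤ m, and let α ∈ (0, 1). If a strategy profile (X, Y) with E(X) = m + α and E(Y) = b is a Nash equilibrium of the two-player all-pay auction with valuations (v1, v2), then m(m+1)/b = v1/2, (X, Y) is a Nash equilibrium of the discrete General Lotto game Γ(m + α, b), and Y = (1 − b/m)·δ_0 + (b/m)·U_E^m. -/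
open scoped BigOperators

set_option maxHeartbeats 1600000

namespace AllPay81

open Finset

/- ===================== generic fubini over weight functions =============== -/
section fubini_raw
variable {ξ η : ℕ → ℝ}
variable (hξ : Summable ξ) (hη : Summable η) (hξn : ∀ n, 0 ≤ ξ n) (hηn : ∀ n, 0 ≤ η n)
  (hξ1 : ∑' n, ξ n = 1) (hη1 : ∑' n, η n = 1)

include hξ hη hξn hηn hξ1 hη1 in
lemma fubini_raw :
    (∑' n, ξ n * ∑ k ∈ Finset.range n, η k) + (∑' n, η n * ∑ k ∈ Finset.range n, ξ k)
      + (∑' n, ξ n * η n) = 1 := by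
  classical
  have hprod : Summable (fun q : ℕ × ℕ => ξ q.1 * η q.2) := hξ.mul_of_nonneg hη hξn hηn
  have hnn : ∀ q : ℕ × ℕ, 0 ≤ ξ q.1 * η q.2 := fun q => mul_nonneg (hξn _) (hηn _)
  have hdom : ∀ (F : ℕ × ℕ → ℝ), (∀ q, 0 ≤ F q) → (∀ q, F q ≤ ξ q.1 * η q.2) → Summable F :=
    fun F h0 h1 => Summable.of_nonneg_of_le h0 h1 hprod
  have hfib : ∀ (F : ℕ × ℕ → ℝ), (∀ q, 0 ≤ F q) → (∀ q, F q ≤ ξ q.1 * η q.2) → ∀ n,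
      Summable (fun k => F (n, k)) := fun F h0 h1 n =>
    Summable.of_nonneg_of_le (fun k => h0 (n,k)) (fun k => h1 (n,k)) (hη.mul_left (ξ n))
  set F1 : ℕ × ℕ → ℝ := fun q => if q.2 < q.1 then ξ q.1 * η q.2 else 0 with hF1d
  set F2 : ℕ × ℕ → ℝ := fun q => if q.1 < q.2 then ξ q.1 * η q.2 else 0 with hF2d
  set F3 : ℕ × ℕ → ℝ := fun q => if q.1 = q.2 then ξ q.1 * η q.2 else 0 with hF3d
  have h01 : ∀ q, 0 ≤ F1 q := fun q => by simp only [hF1d]; split_ifs; exacts [hnn q, le_rfl]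
  have h02 : ∀ q, 0 ≤ F2 q := fun q => by simp only [hF2d]; split_ifs; exacts [hnn q, le_rfl]
  have h03 : ∀ q, 0 ≤ F3 q := fun q => by simp only [hF3d]; split_ifs; exacts [hnn q, le_rfl]
  have hle1 : ∀ q, F1 q ≤ ξ q.1 * η q.2 := fun q => by
    simp only [hF1d]; split_ifs; exacts [le_rfl, hnn q]
  have hle2 : ∀ q, F2 q ≤ ξ q.1 * η q.2 := fun q => by
    simp only [hF2d]; split_ifs; exacts [le_rfl, hnn q]
  have hle3 : ∀ q, F3 q ≤ ξ q.1 * η q.2 := fun q => by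
    simp only [hF3d]; split_ifs; exacts [le_rfl, hnn q]
  have hs1 : Summable F1 := hdom _ h01 hle1
  have hs2 : Summable F2 := hdom _ h02 hle2
  have hs3 : Summable F3 := hdom _ h03 hle3
  have e1 : ∑' q, F1 q = ∑' n, ξ n * ∑ k ∈ Finset.range n, η k := by
    rw [Summable.tsum_prod' hs1 (hfib F1 h01 hle1)]
    refine tsum_congr fun n => ?_
    rw [tsum_eq_sum (s := Finset.range n) (by intro k hk; simp at hk; simp [hF1d]; omega),
      Finset.mul_sum]
    refine Finset.sum_congr rfl fun k hk => ?_
    simp at hk; simp [hF1d, hk]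
  have e2 : ∑' q, F2 q = ∑' n, η n * ∑ k ∈ Finset.range n, ξ k := by
    have hswap : ∑' q : ℕ × ℕ, F2 q = ∑' q : ℕ × ℕ, F2 ((Equiv.prodComm ℕ ℕ) q) :=
      ((Equiv.prodComm ℕ ℕ).tsum_eq F2).symm
    have hG : ∀ q : ℕ × ℕ, F2 ((Equiv.prodComm ℕ ℕ) q) =
        (if q.2 < q.1 then η q.1 * ξ q.2 else 0) := by
      intro q; simp [hF2d, Equiv.prodComm]; rw [mul_comm]
    rw [hswap, tsum_congr hG]
    have h01' : ∀ q : ℕ × ℕ, 0 ≤ (if q.2 < q.1 then η q.1 * ξ q.2 else 0) := fun q => by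
      split_ifs with h
      · exact mul_nonneg (hηn _) (hξn _)
      · exact le_rfl
    have hle' : ∀ q : ℕ × ℕ, (if q.2 < q.1 then η q.1 * ξ q.2 else 0) ≤ η q.1 * ξ q.2 := by
      intro q; split_ifs with h
      · exact le_rfl
      · exact mul_nonneg (hηn _) (hξn _)
    have hsG : Summable (fun q : ℕ × ℕ => if q.2 < q.1 then η q.1 * ξ q.2 else 0) :=
      Summable.of_nonneg_of_le h01' hle' (hη.mul_of_nonneg hξ hηn hξn)
    rw [Summable.tsum_prod' hsG (fun n => Summable.of_nonneg_of_le (fun k => h01' (n,k))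
      (fun k => hle' (n,k)) (hξ.mul_left (η n)))]
    refine tsum_congr fun n => ?_
    rw [tsum_eq_sum (s := Finset.range n) (by intro k hk; simp at hk; exact if_neg (by simp; omega)),
      Finset.mul_sum]
    refine Finset.sum_congr rfl fun k hk => ?_
    simp at hk; simp [hk]
  have e3 : ∑' q, F3 q = ∑' n, ξ n * η n := by
    rw [Summable.tsum_prod' hs3 (hfib F3 h03 hle3)]
    refine tsum_congr fun n => ?_
    rw [tsum_eq_single n (by intro k hk; simp [hF3d, Ne.symm hk])]
    simp [hF3d]
  have etot : ∑' q : ℕ × ℕ, ξ q.1 * η q.2 = 1 := by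
    rw [Summable.tsum_prod' hprod (hfib _ hnn (fun q => le_rfl))]
    have : ∀ n, ∑' k, ξ n * η k = ξ n := by
      intro n; rw [tsum_mul_left, hη1, mul_one]
    rw [tsum_congr this, hξ1]
  have hsplit : ∀ q : ℕ × ℕ, ξ q.1 * η q.2 = F1 q + F2 q + F3 q := by
    intro q
    simp only [hF1d, hF2d, hF3d]
    rcases lt_trichotomy q.2 q.1 with h | h | h
    · rw [if_pos h, if_neg (by omega), if_neg (by omega)]; ring
    · rw [if_neg (by omega), if_neg (by omega), if_pos (by omega)]; ring
    · rw [if_neg (by omega), if_pos h, if_neg (by omega)]; ring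
  rw [← e1, ← e2, ← e3, ← Summable.tsum_add hs1 hs2, ← Summable.tsum_add (hs1.add hs2) hs3, ← etot]
  exact tsum_congr fun q => (hsplit q).symm
end fubini_raw

/- ===================== basic strategy facts =============== -/

noncomputable def cdf (ξ : Strategy) (n : ℕ) : ℝ := ∑ k ∈ Finset.range n, ξ.p k

lemma summable_p (ξ : Strategy) : Summable ξ.p := ξ.total.summable

lemma tsum_p (ξ : Strategy) : ∑' n, ξ.p n = 1 := ξ.total.tsum_eq

lemma p_le_one (ξ : Strategy) (n : ℕ) : ξ.p n ≤ 1 := by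
  have := Summable.le_tsum (summable_p ξ) n (fun j _ => ξ.nonneg j)
  rwa [tsum_p ξ] at this

lemma cdf_nonneg (ξ : Strategy) (n : ℕ) : 0 ≤ cdf ξ n :=
  Finset.sum_nonneg fun k _ => ξ.nonneg k

lemma cdf_succ (ξ : Strategy) (n : ℕ) : cdf ξ (n + 1) = cdf ξ n + ξ.p n :=
  Finset.sum_range_succ _ n

lemma cdf_le_one (ξ : Strategy) (n : ℕ) : cdf ξ n ≤ 1 := by
  have := Summable.sum_le_tsum (Finset.range n) (fun i _ => ξ.nonneg i) (summable_p ξ)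
  rwa [tsum_p ξ] at this

noncomputable def sfun (η : Strategy) (n : ℕ) : ℝ := cdf η n + cdf η (n + 1)

lemma sfun_nonneg (η : Strategy) (n : ℕ) : 0 ≤ sfun η n :=
  add_nonneg (cdf_nonneg η n) (cdf_nonneg η (n+1))

lemma sfun_le_two (η : Strategy) (n : ℕ) : sfun η n ≤ 2 := by
  have h1 := cdf_le_one η n; have h2 := cdf_le_one η (n+1); unfold sfun; linarith

lemma sfun_succ_sub (η : Strategy) (n : ℕ) :
    sfun η (n + 1) - sfun η n = η.p n + η.p (n + 1) := by
  simp only [sfun, cdf_succ]; ring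

lemma summable_mul_cdf (ξ η : Strategy) : Summable (fun n => ξ.p n * cdf η n) :=
  Summable.of_nonneg_of_le
    (fun n => mul_nonneg (ξ.nonneg n) (cdf_nonneg η n))
    (fun n => by nlinarith [ξ.nonneg n, cdf_le_one η n, cdf_nonneg η n])
    (summable_p ξ)

lemma summable_mul_cdf_succ (ξ η : Strategy) : Summable (fun n => ξ.p n * cdf η (n+1)) :=
  Summable.of_nonneg_of_le
    (fun n => mul_nonneg (ξ.nonneg n) (cdf_nonneg η (n+1)))
    (fun n => by nlinarith [ξ.nonneg n, cdf_le_one η (n+1), cdf_nonneg η (n+1)])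
    (summable_p ξ)

lemma summable_mul_sfun (ξ η : Strategy) : Summable (fun n => ξ.p n * sfun η n) := by
  have h := (summable_mul_cdf ξ η).add (summable_mul_cdf_succ ξ η)
  apply h.congr
  intro n; unfold sfun; ring

lemma summable_prEq (ξ η : Strategy) : Summable (fun n => ξ.p n * η.p n) :=
  Summable.of_nonneg_of_le
    (fun n => mul_nonneg (ξ.nonneg n) (η.nonneg n))
    (fun n => by nlinarith [ξ.nonneg n, p_le_one η n, η.nonneg n])
    (summable_p ξ)

lemma prGT_eq (ξ η : Strategy) : prGT ξ η = ∑' n, ξ.p n * cdf η n := rfl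

lemma fubini (ξ η : Strategy) : prGT ξ η + prGT η ξ + prEq ξ η = 1 :=
  fubini_raw (summable_p ξ) (summable_p η) ξ.nonneg η.nonneg (tsum_p ξ) (tsum_p η)

/-- `sSum ξ η = Σ ξ_n s^η_n`. -/
noncomputable def sSum (ξ η : Strategy) : ℝ := ∑' n, ξ.p n * sfun η n

lemma sSum_eq (ξ η : Strategy) : sSum ξ η = 2 * prGT ξ η + prEq ξ η := by
  unfold sSum
  have h : ∀ n, ξ.p n * sfun η n = 2 * (ξ.p n * cdf η n) + ξ.p n * η.p n := by
    intro n; simp only [sfun, cdf_succ]; ring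
  rw [tsum_congr h, Summable.tsum_add ((summable_mul_cdf ξ η).mul_left 2) (summable_prEq ξ η),
    tsum_mul_left]
  rfl

lemma prEq_comm (ξ η : Strategy) : prEq ξ η = prEq η ξ :=
  tsum_congr fun n => mul_comm _ _

lemma sSum_pair (ξ η : Strategy) : sSum ξ η + sSum η ξ = 2 := by
  rw [sSum_eq, sSum_eq, prEq_comm η ξ]
  have := fubini ξ η
  linarith

lemma Hval_eq_sSum (ξ η : Strategy) : Hval ξ η = sSum ξ η - 1 := by
  have h := fubini ξ η
  rw [sSum_eq]; unfold Hval at *; linarith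

lemma payoff_eq_sSum (v : ℝ) (ξ η : Strategy) :
    payoff v ξ η = v / 2 * sSum ξ η - ξ.exp := by
  rw [sSum_eq]; unfold payoff; ring

/- ===================== point-mass strategies =============== -/

noncomputable def delta (j : ℕ) : Strategy where
  p := deltaFn j
  nonneg := fun n => by unfold deltaFn; split_ifs <;> norm_num
  total := by unfold deltaFn; exact hasSum_ite_eq j 1
  finExp := by
    apply summable_of_ne_finset_zero (s := {j})
    intro n hn; simp at hn; unfold deltaFn; simp [hn]

lemma delta_exp (j : ℕ) : (delta j).exp = j := by
  unfold Strategy.exp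
  rw [tsum_eq_single j]
  · simp [delta, deltaFn]
  · intro n hn; simp [delta, deltaFn, hn]

lemma sSum_delta (j : ℕ) (η : Strategy) : sSum (delta j) η = sfun η j := by
  unfold sSum
  rw [tsum_eq_single j]
  · simp [delta, deltaFn]
  · intro n hn; simp [delta, deltaFn, hn]

lemma payoff_delta (v : ℝ) (j : ℕ) (η : Strategy) :
    payoff v (delta j) η = v / 2 * sfun η j - j := by
  rw [payoff_eq_sSum, sSum_delta, delta_exp]


end AllPay81

namespace AllPay81H
open Finset


/-- Abel summation for telescoping weights. -/
lemma abel_sum (T : ℕ → ℝ) (N : ℕ) :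
    ∑ n ∈ Finset.range N, (n : ℝ) * (T (n+1) - T n)
      = N * T N - ∑ i ∈ Finset.range N, T (i+1) := by
  induction N with
  | zero => simp
  | succ N ih =>
    rw [Finset.sum_range_succ, ih, Finset.sum_range_succ]
    push_cast
    ring

/-- `∑_{i<2M} ⌊i/2⌋ = M(M−1)` (as reals). -/
lemma sum_div2_even (M : ℕ) :
    ∑ i ∈ Finset.range (2*M), ((i/2 : ℕ) : ℝ) = M * (M - 1) := by
  induction M with
  | zero => simp
  | succ M ih =>
    have h1 : 2*(M+1) = (2*M) + 1 + 1 := by ring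
    rw [h1, Finset.sum_range_succ, Finset.sum_range_succ, ih]
    have e1 : ((2*M)/2 : ℕ) = M := by omega
    have e2 : ((2*M+1)/2 : ℕ) = M := by omega
    rw [e1, e2]
    push_cast
    ring

lemma sum_div2_odd (M : ℕ) :
    ∑ i ∈ Finset.range (2*M+1), ((i/2 : ℕ) : ℝ) = M * M := by
  rw [Finset.sum_range_succ, sum_div2_even]
  have e1 : ((2*M)/2 : ℕ) = M := by omega
  rw [e1]; push_cast; ring

/-- Alternating sums over an even-length window starting at an even number cancel. -/
lemma alt_sum (c : ℝ) (s N : ℕ) :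
    ∑ i ∈ Finset.range (2*N), (if Even (2*s + i) then -c else c) = 0 := by
  induction N with
  | zero => simp
  | succ N ih =>
    have h1 : 2*(N+1) = (2*N) + 1 + 1 := by ring
    rw [h1, Finset.sum_range_succ, Finset.sum_range_succ, ih]
    have e1 : Even (2*s + 2*N) := ⟨s + N, by ring⟩
    have e2 : ¬ Even (2*s + (2*N+1)) := by
      rcases Nat.even_or_odd (2*s + (2*N+1)) with h | h
      · exfalso; rcases h with ⟨t, ht⟩; omega
      · intro hc; rcases hc with ⟨t, ht⟩; omega
    rw [if_pos e1, if_neg e2]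
    ring

/-- pairing lemma for sums over `range (2M+1)`. -/
lemma pair_sum (f : ℕ → ℝ) (M : ℕ) :
    ∑ n ∈ Finset.range (2*M+1), f n
      = f 0 + ∑ i ∈ Finset.range M, (f (2*i+1) + f (2*i+2)) := by
  induction M with
  | zero => simp
  | succ M ih =>
    have h1 : 2*(M+1)+1 = (2*M+1) + 1 + 1 := by ring
    rw [h1, Finset.sum_range_succ, Finset.sum_range_succ, ih, Finset.sum_range_succ]
    have e1 : 2*M+1+1 = 2*M+2 := by ring
    have e2 : 2*M+1 = 2*M+1 := rfl
    rw [e1]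
    ring


end AllPay81H

namespace AllPay81
open AllPay81H Finset


/-- cdf of `Y* = (1−b/m)δ₀ + (b/m)U_E^m`. -/
noncomputable def Scdf (m : ℕ) (b : ℝ) : ℕ → ℝ := fun n =>
  if n = 0 then 0
  else if n ≤ 2*m+1 then (1 - b/((m:ℝ)+1)) + (b/((m:ℝ)*((m:ℝ)+1))) * (((n-1)/2 : ℕ) : ℝ)
  else 1

section ystar
variable {m : ℕ} {b : ℝ}

lemma hM0 (hm : 1 ≤ m) : (0:ℝ) < (m:ℝ) := by
  have : (1:ℝ) ≤ (m:ℝ) := by exact_mod_cast hm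
  linarith

lemma Scdf_zero : Scdf m b 0 = 0 := by simp [Scdf]

lemma Scdf_top (n : ℕ) (h : 2*m+2 ≤ n) : Scdf m b n = 1 := by
  simp only [Scdf]
  rw [if_neg (by omega), if_neg (by omega)]

lemma Scdf_last (hm : 1 ≤ m) : Scdf m b (2*m+1) = 1 := by
  have hm0 := hM0 (m := m) hm
  simp only [Scdf]
  rw [if_neg (by omega), if_pos (by omega)]
  have e : ((2*m+1-1)/2 : ℕ) = m := by omega
  rw [e]
  field_simp
  ring

/-- The pmf of Y* matches the conclusion formula. -/
lemma Ystar_p_eq (hm : 1 ≤ m) (n : ℕ) :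
    Scdf m b (n+1) - Scdf m b n
      = (1 - b / (m : ℝ)) * deltaFn 0 n + (b / (m : ℝ)) * UE m n := by
  have hm0 := hM0 (m := m) hm
  have hm1 : (0:ℝ) < (m:ℝ)+1 := by linarith
  rcases Nat.eq_zero_or_pos n with rfl | hn
  · -- n = 0
    have e0 : Scdf m b 0 = 0 := Scdf_zero
    have e1 : Scdf m b (0+1) = 1 - b/((m:ℝ)+1) := by
      simp only [Scdf]
      rw [if_neg (by omega), if_pos (by omega)]
      norm_num
    have e2 : deltaFn 0 0 = 1 := by simp [deltaFn]
    have e3 : UE m 0 = ((m:ℝ)+1)⁻¹ := by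
      simp only [UE]
      rw [if_pos ⟨Even.zero, by omega⟩]
    rw [e0, e1, e2, e3]
    field_simp
    ring
  · have hd : deltaFn 0 n = 0 := by simp [deltaFn]; omega
    rw [hd]
    by_cases h1 : n ≤ 2*m
    · -- middle range
      have hS1 : Scdf m b (n+1) = (1 - b/((m:ℝ)+1)) + (b/((m:ℝ)*((m:ℝ)+1))) * ((n/2 : ℕ) : ℝ) := by
        simp only [Scdf]
        rw [if_neg (by omega), if_pos (by omega)]
        norm_num
      have hS0 : Scdf m b n = (1 - b/((m:ℝ)+1)) + (b/((m:ℝ)*((m:ℝ)+1))) * (((n-1)/2 : ℕ) : ℝ) := by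
        simp only [Scdf]
        rw [if_neg (by omega), if_pos (by omega)]
      rw [hS1, hS0]
      rcases Nat.even_or_odd n with he | ho
      · -- n even positive: mass uu
        obtain ⟨j, rfl⟩ := he
        have hj : 1 ≤ j := by omega
        have e1 : ((j+j)/2 : ℕ) = j := by omega
        have e2 : (((j+j)-1)/2 : ℕ) = j - 1 := by omega
        rw [e1, e2]
        have hUE : UE m (j+j) = ((m:ℝ)+1)⁻¹ := by
          simp only [UE]
          rw [if_pos ⟨⟨j, by ring⟩, by omega⟩]
        rw [hUE]
        have : ((j - 1 : ℕ) : ℝ) = (j : ℝ) - 1 := by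
          have : (1:ℕ) ≤ j := hj
          push_cast [this]
          ring
        rw [this]
        field_simp
        ring
      · -- n odd: zero
        obtain ⟨j, rfl⟩ := ho
        have e1 : ((2*j+1)/2 : ℕ) = j := by omega
        have e2 : ((2*j+1-1)/2 : ℕ) = j := by omega
        rw [e1, e2]
        have hUE : UE m (2*j+1) = 0 := by
          simp only [UE]
          rw [if_neg (by rintro ⟨⟨t, ht⟩, -⟩; omega)]
        rw [hUE]
        ring
    · -- n ≥ 2m+1 : zero
      have hUE : UE m n = 0 := by
        simp only [UE]
        rw [if_neg (by rintro ⟨-, h⟩; omega)]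
      rw [hUE]
      rcases Nat.eq_or_lt_of_le (show 2*m+1 ≤ n by omega) with he | hlt
      · rw [← he, Scdf_last hm, Scdf_top (n := 2*m+1+1) (by omega)]
        ring
      · rw [Scdf_top (n := n+1) (by omega), Scdf_top (n := n) (by omega)]
        ring

end ystar

section ystar2
variable {m : ℕ} {b : ℝ}

lemma UE_nonneg (m : ℕ) (n : ℕ) : 0 ≤ UE m n := by
  unfold UE; split_ifs
  · positivity
  · exact le_rfl

lemma deltaFn_nonneg (j n : ℕ) : 0 ≤ deltaFn j n := by
  unfold deltaFn; split_ifs <;> norm_num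

lemma Ystar_diff_nonneg (hm : 1 ≤ m) (hb0 : 0 < b) (hbm : b ≤ (m:ℝ)) (n : ℕ) :
    0 ≤ Scdf m b (n+1) - Scdf m b n := by
  rw [Ystar_p_eq hm n]
  have hm0 := hM0 (m := m) hm
  have h1 : 0 ≤ 1 - b/(m:ℝ) := by
    rw [sub_nonneg, div_le_one hm0]; exact hbm
  have h2 : 0 ≤ b/(m:ℝ) := le_of_lt (div_pos hb0 hm0)
  exact add_nonneg (mul_nonneg h1 (deltaFn_nonneg 0 n)) (mul_nonneg h2 (UE_nonneg m n))

lemma Scdf_diff_zero_top (n : ℕ) (h : 2*m+1 ≤ n) (hm : 1 ≤ m) :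
    Scdf m b (n+1) - Scdf m b n = 0 := by
  rcases Nat.eq_or_lt_of_le h with he | hlt
  · rw [← he, Scdf_last hm, Scdf_top (n := 2*m+1+1) (by omega)]; ring
  · rw [Scdf_top (n := n+1) (by omega), Scdf_top (n := n) (by omega)]; ring

noncomputable def Ystar (m : ℕ) (b : ℝ) (hm : 1 ≤ m) (hb0 : 0 < b) (hbm : b ≤ (m:ℝ)) :
    Strategy where
  p := fun n => Scdf m b (n+1) - Scdf m b n
  nonneg := Ystar_diff_nonneg hm hb0 hbm
  total := by
    have hz : ∀ n ∉ Finset.range (2*m+2), Scdf m b (n+1) - Scdf m b n = 0 := by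
      intro n hn
      simp only [Finset.mem_range, not_lt] at hn
      exact Scdf_diff_zero_top n (by omega) hm
    have h := hasSum_sum_of_ne_finset_zero (L := SummationFilter.unconditional ℕ) hz
    rwa [Finset.sum_range_sub (Scdf m b) (2*m+2), Scdf_top (n := 2*m+2) (by omega),
      Scdf_zero, sub_zero] at h
  finExp := by
    apply summable_of_ne_finset_zero (s := Finset.range (2*m+2))
    intro n hn
    simp only [Finset.mem_range, not_lt] at hn
    show (n:ℝ) * (Scdf m b (n+1) - Scdf m b n) = 0
    rw [Scdf_diff_zero_top n (by omega) hm, mul_zero]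

lemma Ystar_cdf (hm : 1 ≤ m) (hb0 : 0 < b) (hbm : b ≤ (m:ℝ)) (n : ℕ) :
    cdf (Ystar m b hm hb0 hbm) n = Scdf m b n := by
  unfold cdf
  show (∑ k ∈ Finset.range n, (Scdf m b (k+1) - Scdf m b k)) = _
  rw [Finset.sum_range_sub (Scdf m b) n, Scdf_zero, sub_zero]

lemma Ystar_exp (hm : 1 ≤ m) (hb0 : 0 < b) (hbm : b ≤ (m:ℝ)) :
    (Ystar m b hm hb0 hbm).exp = b := by
  have hm0 := hM0 (m := m) hm
  have hm1 : (0:ℝ) < (m:ℝ)+1 := by linarith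
  unfold Strategy.exp
  rw [tsum_eq_sum (s := Finset.range (2*m+2)) (by
    intro n hn
    simp only [Finset.mem_range, not_lt] at hn
    show (n:ℝ) * (Scdf m b (n+1) - Scdf m b n) = 0
    rw [Scdf_diff_zero_top n (by omega) hm, mul_zero])]
  show (∑ n ∈ Finset.range (2*m+2), (n:ℝ) * (Scdf m b (n+1) - Scdf m b n)) = b
  rw [AllPay81H.abel_sum (Scdf m b) (2*m+2)]
  rw [Scdf_top (n := 2*m+2) (by omega)]
  have hsum : ∑ i ∈ Finset.range (2*m+2), Scdf m b (i+1)
      = (2*(m:ℝ)+1) * (1 - b/((m:ℝ)+1)) + (b/((m:ℝ)*((m:ℝ)+1))) * ((m:ℝ)*(m:ℝ)) + 1 := by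
    rw [Finset.sum_range_succ]
    have h1 : Scdf m b (2*m+1+1) = 1 := Scdf_top (n := 2*m+2) (by omega)
    rw [h1]
    have h2 : ∀ i ∈ Finset.range (2*m+1),
        Scdf m b (i+1) = (1 - b/((m:ℝ)+1)) + (b/((m:ℝ)*((m:ℝ)+1))) * ((i/2 : ℕ) : ℝ) := by
      intro i hi
      simp only [Finset.mem_range] at hi
      simp only [Scdf]
      rw [if_neg (by omega), if_pos (by omega)]
      norm_num
    rw [Finset.sum_congr rfl h2, Finset.sum_add_distrib, Finset.sum_const, ← Finset.mul_sum,
      AllPay81H.sum_div2_odd m]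
    simp only [Finset.card_range, nsmul_eq_mul]
    push_cast
    ring
  rw [hsum]
  push_cast
  field_simp
  ring

/-- affine upper bound for `s^{Y*}`. -/
lemma Ystar_sfun_le (hm : 1 ≤ m) (hb0 : 0 < b) (hbm : b ≤ (m:ℝ)) (n : ℕ) :
    Scdf m b n + Scdf m b (n+1)
      ≤ (2*(1 - b/((m:ℝ)+1)) - b/((m:ℝ)*((m:ℝ)+1)))
        + (b/((m:ℝ)*((m:ℝ)+1))) * (n:ℝ) := by
  have hm0 := hM0 (m := m) hm
  have hm1 : (0:ℝ) < (m:ℝ)+1 := by linarith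
  have hmm1 : (0:ℝ) < (m:ℝ)*((m:ℝ)+1) := by positivity
  rcases Nat.eq_zero_or_pos n with rfl | hn
  · -- n = 0 : uses b ≤ m
    rw [Scdf_zero]
    have e1 : Scdf m b (0+1) = 1 - b/((m:ℝ)+1) := by
      simp only [Scdf]
      rw [if_neg (by omega), if_pos (by omega)]
      norm_num
    rw [e1]
    have key : b/((m:ℝ)+1) + b/((m:ℝ)*((m:ℝ)+1)) = b/(m:ℝ) := by
      field_simp
    have h3 : b/(m:ℝ) ≤ 1 := (div_le_one hm0).mpr hbm
    push_cast
    linarith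
  · by_cases h1 : n ≤ 2*m
    · -- equality zone
      have hS0 : Scdf m b n = (1 - b/((m:ℝ)+1)) + (b/((m:ℝ)*((m:ℝ)+1))) * (((n-1)/2 : ℕ) : ℝ) := by
        simp only [Scdf]; rw [if_neg (by omega), if_pos (by omega)]
      have hS1 : Scdf m b (n+1) = (1 - b/((m:ℝ)+1)) + (b/((m:ℝ)*((m:ℝ)+1))) * ((n/2 : ℕ) : ℝ) := by
        simp only [Scdf]; rw [if_neg (by omega), if_pos (by omega)]; norm_num
      rw [hS0, hS1]
      have e : (((n-1)/2 : ℕ) : ℝ) + ((n/2 : ℕ) : ℝ) = (n:ℝ) - 1 := by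
        have : ((n-1)/2 : ℕ) + (n/2 : ℕ) = n - 1 := by omega
        have h2 : (((n-1)/2 : ℕ) : ℝ) + ((n/2 : ℕ) : ℝ) = (((n-1) : ℕ) : ℝ) := by
          exact_mod_cast congrArg (Nat.cast : ℕ → ℝ) this
        rw [h2]
        have : (1:ℕ) ≤ n := hn
        push_cast [this]
        ring
      have e2 : b / ((m:ℝ) * ((m:ℝ) + 1)) * (((n - 1) / 2 : ℕ) : ℝ)
          + b / ((m:ℝ) * ((m:ℝ) + 1)) * ((n / 2 : ℕ) : ℝ)
          = b / ((m:ℝ) * ((m:ℝ) + 1)) * ((n:ℝ) - 1) := by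
        rw [← mul_add, e]
      linarith
    · -- n ≥ 2m+1
      have hL : Scdf m b n + Scdf m b (n+1) ≤ 2 := by
        rcases Nat.eq_or_lt_of_le (show 2*m+1 ≤ n by omega) with he | hlt
        · rw [← he, Scdf_last hm, Scdf_top (n := 2*m+1+1) (by omega)]; norm_num
        · rw [Scdf_top (n := n+1) (by omega), Scdf_top (n := n) (by omega)]; norm_num
      have hR : (2*(1 - b/((m:ℝ)+1)) - b/((m:ℝ)*((m:ℝ)+1)))
          + (b/((m:ℝ)*((m:ℝ)+1))) * ((2*(m:ℝ)+1)) = 2 := by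
        field_simp
        ring
      have hmono : ((2*(m:ℝ)+1)) ≤ (n:ℝ) := by
        have : 2*m+1 ≤ n := by omega
        exact_mod_cast this
      have huu : 0 ≤ b/((m:ℝ)*((m:ℝ)+1)) := le_of_lt (div_pos hb0 hmm1)
      nlinarith [mul_le_mul_of_nonneg_left hmono huu]

end ystar2

section xdd
variable {m k : ℕ} {α : ℝ}

/-- slope of the optimal-line for player 1's tests. -/
noncomputable def gv (m : ℕ) (α : ℝ) : ℝ := ((m:ℝ)+1-α)/((m:ℝ)*((m:ℝ)+1))

/-- dip size. -/
noncomputable def dlt (m : ℕ) (α : ℝ) : ℝ :=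
  min (α/((m:ℝ)+1)) (min ((1-α)/(m:ℝ)) (gv m α/2)) / 2

/-- cdf of the test strategy `X″_k` with dip at `2k−1`. -/
noncomputable def Tcdf (m : ℕ) (α : ℝ) (k : ℕ) : ℕ → ℝ := fun n =>
  if n ≤ 2*k-1 then gv m α * ((n/2 : ℕ) : ℝ)
  else if n ≤ 2*m+1 then gv m α * ((n/2 : ℕ) : ℝ) + (if Even n then -(dlt m α) else dlt m α)
  else 1

section basicfacts
variable (hm : 1 ≤ m) (ha0 : 0 < α) (ha1 : α < 1)

include hm ha0 ha1

lemma gv_pos : 0 < gv m α := by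
  have hm0 := hM0 (m := m) hm
  have : (0:ℝ) < (m:ℝ)+1 - α := by linarith
  unfold gv; positivity

lemma dlt_pos : 0 < dlt m α := by
  have hm0 := hM0 (m := m) hm
  have h1 : (0:ℝ) < α/((m:ℝ)+1) := by positivity
  have h2 : (0:ℝ) < (1-α)/(m:ℝ) := by
    have : (0:ℝ) < 1 - α := by linarith
    positivity
  have h3 := gv_pos (m := m) hm ha0 ha1
  unfold dlt
  have : 0 < min (α/((m:ℝ)+1)) (min ((1-α)/(m:ℝ)) (gv m α/2)) :=
    lt_min h1 (lt_min h2 (by linarith))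
  linarith

lemma dlt_lt_r : dlt m α < α/((m:ℝ)+1) := by
  have h := dlt_pos (m := m) hm ha0 ha1
  have h1 : dlt m α + dlt m α ≤ α/((m:ℝ)+1) := by
    unfold dlt
    have := min_le_left (α/((m:ℝ)+1)) (min ((1-α)/(m:ℝ)) (gv m α/2))
    linarith
  linarith

lemma two_dlt_le_am : 2 * dlt m α ≤ (1-α)/(m:ℝ) := by
  unfold dlt
  have h := min_le_right (α/((m:ℝ)+1)) (min ((1-α)/(m:ℝ)) (gv m α/2))
  have h2 := min_le_left ((1-α)/(m:ℝ)) (gv m α/2)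
  linarith

lemma two_dlt_lt_gv : 2 * dlt m α < gv m α := by
  have hg := gv_pos (m := m) hm ha0 ha1
  unfold dlt
  have h := min_le_right (α/((m:ℝ)+1)) (min ((1-α)/(m:ℝ)) (gv m α/2))
  have h2 := min_le_right ((1-α)/(m:ℝ)) (gv m α/2)
  linarith

lemma gv_mul : gv m α * ((m:ℝ)*((m:ℝ)+1)) = (m:ℝ)+1-α := by
  have hm0 := hM0 (m := m) hm
  unfold gv
  field_simp

lemma gv_m_id : gv m α * (m:ℝ) = 1 - α/((m:ℝ)+1) := by
  have hm0 := hM0 (m := m) hm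
  unfold gv
  field_simp

end basicfacts

section tfacts
variable (hm : 1 ≤ m) (ha0 : 0 < α) (ha1 : α < 1) (hk1 : 1 ≤ k) (hkm : k ≤ m)

include hm ha0 ha1 hk1 hkm

lemma Tcdf_zero : Tcdf m α k 0 = 0 := by
  unfold Tcdf
  rw [if_pos (by omega)]
  norm_num

lemma Tcdf_top (n : ℕ) (h : 2*m+2 ≤ n) : Tcdf m α k n = 1 := by
  unfold Tcdf
  rw [if_neg (by omega), if_neg (by omega)]

lemma Tcdf_2m1 : Tcdf m α k (2*m+1) = gv m α * (m:ℝ) + dlt m α := by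
  unfold Tcdf
  rw [if_neg (by omega), if_pos (by omega),
    if_neg (by rintro ⟨t, ht⟩; omega)]
  have e : ((2*m+1)/2 : ℕ) = m := by omega
  rw [e]

lemma Tcdf_diff_top (n : ℕ) (h : 2*m+2 ≤ n) : Tcdf m α k (n+1) - Tcdf m α k n = 0 := by
  rw [Tcdf_top hm ha0 ha1 hk1 hkm (n+1) (by omega), Tcdf_top hm ha0 ha1 hk1 hkm n (by omega)]
  ring

/-- nonnegativity of the pmf of `X″_k`. -/
lemma Tcdf_diff_nonneg (n : ℕ) : 0 ≤ Tcdf m α k (n+1) - Tcdf m α k n := by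
  have hg := gv_pos (m := m) hm ha0 ha1
  have hd := dlt_pos (m := m) hm ha0 ha1
  have h2g := two_dlt_lt_gv (m := m) hm ha0 ha1
  have hr := dlt_lt_r (m := m) hm ha0 ha1
  have hm0 := hM0 (m := m) hm
  by_cases hA : n + 1 ≤ 2*k-1
  · -- both in piece 1
    unfold Tcdf
    rw [if_pos (by omega), if_pos (by omega)]
    have : (n/2 : ℕ) ≤ ((n+1)/2 : ℕ) := by omega
    have hc : ((n/2 : ℕ) : ℝ) ≤ (((n+1)/2 : ℕ) : ℝ) := by exact_mod_cast this
    nlinarith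
  · by_cases hB : n ≤ 2*m+1
    · by_cases hC : n = 2*m+1
      · -- top boundary: value α/(m+1) − δ
        subst hC
        rw [Tcdf_top hm ha0 ha1 hk1 hkm (2*m+1+1) (by omega), Tcdf_2m1 hm ha0 ha1 hk1 hkm]
        rw [gv_m_id (m := m) hm ha0 ha1]
        linarith
      · -- n ≤ 2m, n+1 ≥ 2k : piece 2 region
        have hn2k : 2*k-1 ≤ n := by omega
        by_cases hD : n = 2*k-1
        · -- dip boundary : g − δ
          subst hD
          unfold Tcdf
          rw [if_pos (le_refl _), if_neg (by omega), if_pos (by omega)]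
          have he : Even (2*k-1+1) := by
            refine ⟨k, by omega⟩
          rw [if_pos he]
          have e1 : ((2*k-1+1)/2 : ℕ) = k := by omega
          have e2 : ((2*k-1)/2 : ℕ) = k-1 := by omega
          rw [e1, e2]
          have hc : ((k:ℝ)) - ((k-1 : ℕ) : ℝ) = 1 := by
            have : (1:ℕ) ≤ k := hk1
            push_cast [this]
            ring
          nlinarith
        · -- strictly inside piece 2
          have hn : 2*k ≤ n := by omega
          have hn2m : n ≤ 2*m := by omega
          rcases Nat.even_or_odd n with he | ho
          · obtain ⟨j, rfl⟩ := he
            have hT0 : Tcdf m α k (j+j) = gv m α * (j:ℝ) - dlt m α := by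
              unfold Tcdf
              rw [if_neg (by omega), if_pos (by omega), if_pos ⟨j, rfl⟩]
              have e2 : ((j+j)/2 : ℕ) = j := by omega
              rw [e2]; ring
            have hT1 : Tcdf m α k (j+j+1) = gv m α * (j:ℝ) + dlt m α := by
              unfold Tcdf
              rw [if_neg (by omega), if_pos (by omega), if_neg (by rintro ⟨t, ht⟩; omega)]
              have e1 : ((j+j+1)/2 : ℕ) = j := by omega
              rw [e1]
            rw [hT0, hT1]; linarith
          · obtain ⟨j, rfl⟩ := ho
            have hT0 : Tcdf m α k (2*j+1) = gv m α * (j:ℝ) + dlt m α := by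
              unfold Tcdf
              rw [if_neg (by omega), if_pos (by omega), if_neg (by rintro ⟨t, ht⟩; omega)]
              have e : ((2*j+1)/2 : ℕ) = j := by omega
              rw [e]
            have hT1 : Tcdf m α k (2*j+1+1) = gv m α * ((j:ℝ)+1) - dlt m α := by
              unfold Tcdf
              rw [if_neg (by omega), if_pos (by omega), if_pos ⟨j+1, by omega⟩]
              have e : ((2*j+1+1)/2 : ℕ) = j+1 := by omega
              rw [e]; push_cast; ring
            rw [hT0, hT1]; nlinarith
    · -- n ≥ 2m+2
      rw [Tcdf_diff_top hm ha0 ha1 hk1 hkm n (by omega)]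

end tfacts
end xdd

section xdddef
noncomputable def Xdd (m k : ℕ) (α : ℝ) (hm : 1 ≤ m) (ha0 : 0 < α) (ha1 : α < 1)
    (hk1 : 1 ≤ k) (hkm : k ≤ m) : Strategy where
  p := fun n => Tcdf m α k (n+1) - Tcdf m α k n
  nonneg := Tcdf_diff_nonneg hm ha0 ha1 hk1 hkm
  total := by
    have hz : ∀ n ∉ Finset.range (2*m+2), Tcdf m α k (n+1) - Tcdf m α k n = 0 := by
      intro n hn
      simp only [Finset.mem_range, not_lt] at hn
      exact Tcdf_diff_top hm ha0 ha1 hk1 hkm n (by omega)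
    have h := hasSum_sum_of_ne_finset_zero (L := SummationFilter.unconditional ℕ) hz
    rwa [Finset.sum_range_sub (Tcdf m α k) (2*m+2), Tcdf_top hm ha0 ha1 hk1 hkm (2*m+2) (by omega),
      Tcdf_zero hm ha0 ha1 hk1 hkm, sub_zero] at h
  finExp := by
    apply summable_of_ne_finset_zero (s := Finset.range (2*m+2))
    intro n hn
    simp only [Finset.mem_range, not_lt] at hn
    show (n:ℝ) * (Tcdf m α k (n+1) - Tcdf m α k n) = 0
    rw [Tcdf_diff_top hm ha0 ha1 hk1 hkm n (by omega), mul_zero]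


end xdddef

section xdd2
variable {m k : ℕ} {α : ℝ}
variable (hm : 1 ≤ m) (ha0 : 0 < α) (ha1 : α < 1) (hk1 : 1 ≤ k) (hkm : k ≤ m)

include hm ha0 ha1 hk1 hkm

lemma gv_m1_id : gv m α * ((m:ℝ)+1) = 1 + (1-α)/(m:ℝ) := by
  have hm0 := hM0 (m := m) hm
  unfold gv
  field_simp
  ring

lemma Xdd_cdf (n : ℕ) : cdf (Xdd m k α hm ha0 ha1 hk1 hkm) n = Tcdf m α k n := by
  unfold cdf
  show (∑ i ∈ Finset.range n, (Tcdf m α k (i+1) - Tcdf m α k i)) = _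
  rw [Finset.sum_range_sub (Tcdf m α k) n, Tcdf_zero hm ha0 ha1 hk1 hkm, sub_zero]

lemma Xdd_exp : (Xdd m k α hm ha0 ha1 hk1 hkm).exp = (m:ℝ) + α := by
  have hm0 := hM0 (m := m) hm
  unfold Strategy.exp
  rw [tsum_eq_sum (s := Finset.range (2*m+2)) (by
    intro n hn
    simp only [Finset.mem_range, not_lt] at hn
    show (n:ℝ) * (Tcdf m α k (n+1) - Tcdf m α k n) = 0
    rw [Tcdf_diff_top hm ha0 ha1 hk1 hkm n (by omega), mul_zero])]
  show (∑ n ∈ Finset.range (2*m+2), (n:ℝ) * (Tcdf m α k (n+1) - Tcdf m α k n)) = _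
  rw [AllPay81H.abel_sum (Tcdf m α k) (2*m+2), Tcdf_top hm ha0 ha1 hk1 hkm (2*m+2) (by omega)]
  -- evaluate ∑_{i<2m+2} Tcdf (i+1)
  have hsum : ∑ i ∈ Finset.range (2*m+2), Tcdf m α k (i+1)
      = gv m α * ((m:ℝ)*((m:ℝ)+1)) + 1 := by
    rw [Finset.sum_range_succ, Tcdf_top hm ha0 ha1 hk1 hkm (2*m+1+1) (by omega)]
    have hdecomp : ∀ i ∈ Finset.range (2*m+1),
        Tcdf m α k (i+1) = gv m α * (((i+1)/2 : ℕ) : ℝ)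
          + (if 2*k ≤ i+1 then (if Even (i+1) then -(dlt m α) else dlt m α) else 0) := by
      intro i hi
      simp only [Finset.mem_range] at hi
      by_cases hc : i+1 ≤ 2*k-1
      · unfold Tcdf
        rw [if_pos hc, if_neg (show ¬ 2*k ≤ i+1 by omega)]
        ring
      · unfold Tcdf
        rw [if_neg hc, if_pos (show i+1 ≤ 2*m+1 by omega), if_pos (show 2*k ≤ i+1 by omega)]
    rw [Finset.sum_congr rfl hdecomp, Finset.sum_add_distrib, ← Finset.mul_sum]
    have hg : ∑ i ∈ Finset.range (2*m+1), (((i+1)/2 : ℕ) : ℝ) = (m:ℝ)*((m:ℝ)+1) := by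
      have h := Finset.sum_range_succ' (fun j => ((j/2 : ℕ) : ℝ)) (2*m+1)
      -- h : ∑_{i ∈ range (2m+2)} = ∑_{i ∈ range (2m+1)} f (i+1) + f 0
      have h2 : (2:ℕ)*m+1+1 = 2*(m+1) := by ring
      rw [h2] at h
      rw [AllPay81H.sum_div2_even (m+1)] at h
      have : ((0/2 : ℕ) : ℝ) = 0 := by norm_num
      rw [this, add_zero] at h
      rw [← h]
      push_cast
      ring
    have halt : ∑ i ∈ Finset.range (2*m+1),
        (if 2*k ≤ i+1 then (if Even (i+1) then -(dlt m α) else dlt m α) else 0) = 0 := by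
      have h := Finset.sum_range_succ' (fun j =>
        (if 2*k ≤ j then (if Even j then -(dlt m α) else dlt m α) else 0)) (2*m+1)
      have h0 : (if 2*k ≤ 0 then (if Even 0 then -(dlt m α) else dlt m α) else 0) = 0 := by
        rw [if_neg (by omega)]
      rw [h0, add_zero] at h
      -- h : ∑_{i ∈ range (2m+2)} F i = ∑_{i ∈ range (2m+1)} F (i+1)
      rw [← h]
      -- split range (2m+2) at 2k
      rw [Finset.range_eq_Ico, ← Finset.sum_Ico_consecutive _ (Nat.zero_le (2*k)) (by omega : 2*k ≤ 2*m+2)]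
      have hlow : ∑ i ∈ Finset.Ico 0 (2*k),
          (if 2*k ≤ i then (if Even i then -(dlt m α) else dlt m α) else 0) = 0 := by
        apply Finset.sum_eq_zero
        intro i hi
        simp only [Finset.mem_Ico] at hi
        rw [if_neg (by omega)]
      have hhigh : ∑ i ∈ Finset.Ico (2*k) (2*m+2),
          (if 2*k ≤ i then (if Even i then -(dlt m α) else dlt m α) else 0) = 0 := by
        have hcongr : ∀ i ∈ Finset.Ico (2*k) (2*m+2),
            (if 2*k ≤ i then (if Even i then -(dlt m α) else dlt m α) else 0)
              = (if Even i then -(dlt m α) else dlt m α) := by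
          intro i hi
          simp only [Finset.mem_Ico] at hi
          rw [if_pos hi.1]
        rw [Finset.sum_congr rfl hcongr, Finset.sum_Ico_eq_sum_range]
        have hlen : 2*m+2 - 2*k = 2*(m+1-k) := by omega
        rw [hlen]
        have hshift : ∀ i ∈ Finset.range (2*(m+1-k)),
            (if Even (2*k + i) then -(dlt m α) else dlt m α)
              = (if Even (2*k + i) then -(dlt m α) else dlt m α) := fun _ _ => rfl
        exact AllPay81H.alt_sum (dlt m α) k (m+1-k)
      rw [hlow, hhigh, add_zero]
    rw [hg, halt, add_zero]
  rw [hsum, gv_mul (m := m) hm ha0 ha1]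
  push_cast
  ring

end xdd2

section xdd3
variable {m k : ℕ} {α : ℝ}
variable (hm : 1 ≤ m) (ha0 : 0 < α) (ha1 : α < 1) (hk1 : 1 ≤ k) (hkm : k ≤ m)

include hm ha0 ha1 hk1 hkm

lemma Tval1 (n : ℕ) (h : n ≤ 2*k-1) : Tcdf m α k n = gv m α * ((n/2 : ℕ) : ℝ) := by
  unfold Tcdf; rw [if_pos h]

lemma Tval2 (j : ℕ) (h1 : 2*k ≤ j+j) (h2 : j+j ≤ 2*m+1) :
    Tcdf m α k (j+j) = gv m α * (j:ℝ) - dlt m α := by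
  unfold Tcdf
  rw [if_neg (by omega), if_pos h2, if_pos ⟨j, rfl⟩]
  have e : ((j+j)/2 : ℕ) = j := by omega
  rw [e]; ring

lemma Tval3 (j : ℕ) (h1 : 2*k ≤ 2*j+1) (h2 : 2*j+1 ≤ 2*m+1) :
    Tcdf m α k (2*j+1) = gv m α * (j:ℝ) + dlt m α := by
  unfold Tcdf
  rw [if_neg (by omega), if_pos h2, if_neg (by rintro ⟨t, ht⟩; omega)]
  have e : ((2*j+1)/2 : ℕ) = j := by omega
  rw [e]

lemma Tpair_dip :
    Tcdf m α k (2*k-1) + Tcdf m α k (2*k) ≤ gv m α * ((2*k-1 : ℕ) : ℝ) - dlt m α := by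
  have h1 : Tcdf m α k (2*k-1) = gv m α * ((k-1 : ℕ) : ℝ) := by
    rw [Tval1 hm ha0 ha1 hk1 hkm (2*k-1) (le_refl _)]
    congr 2
    omega
  have h2 : Tcdf m α k (2*k) = gv m α * (k:ℝ) - dlt m α := by
    have := Tval2 hm ha0 ha1 hk1 hkm k (by omega) (by omega)
    rwa [show k+k = 2*k by ring] at this
  rw [h1, h2]
  have e1 : ((k-1 : ℕ) : ℝ) = (k:ℝ) - 1 := by
    have : (1:ℕ) ≤ k := hk1
    push_cast [this]; ring
  have e2 : ((2*k-1 : ℕ) : ℝ) = 2*(k:ℝ) - 1 := by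
    have : (1:ℕ) ≤ k := hk1
    push_cast [show (1:ℕ) ≤ 2*k by omega]; ring
  rw [e1, e2]
  ring_nf
  linarith

lemma Tpair_top (n : ℕ) (h : 2*m+1 ≤ n) :
    Tcdf m α k n + Tcdf m α k (n+1) ≤ gv m α * (n:ℝ) - dlt m α := by
  have hg := gv_pos (m := m) hm ha0 ha1
  have hd := dlt_pos (m := m) hm ha0 ha1
  have h2am := two_dlt_le_am (m := m) (α := α) hm ha0 ha1
  have hid := gv_m1_id (m := m) (k := k) hm ha0 ha1 hk1 hkm
  have hm0 := hM0 (m := m) hm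
  rcases Nat.eq_or_lt_of_le h with he | hlt
  · -- n = 2m+1
    rw [← he, Tcdf_2m1 hm ha0 ha1 hk1 hkm, Tcdf_top hm ha0 ha1 hk1 hkm (2*m+1+1) (by omega)]
    have e : ((2*m+1 : ℕ) : ℝ) = (m:ℝ) + ((m:ℝ)+1) := by push_cast; ring
    rw [e, mul_add]
    linarith
  · -- n ≥ 2m+2
    rw [Tcdf_top hm ha0 ha1 hk1 hkm n (by omega), Tcdf_top hm ha0 ha1 hk1 hkm (n+1) (by omega)]
    have hmono : gv m α * ((2*m+2 : ℕ) : ℝ) ≤ gv m α * (n:ℝ) := by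
      apply mul_le_mul_of_nonneg_left _ (le_of_lt hg)
      exact_mod_cast (by omega : 2*m+2 ≤ n)
    have e : ((2*m+2 : ℕ) : ℝ) = 2*((m:ℝ)+1) := by push_cast; ring
    rw [e] at hmono
    have : gv m α * (2*((m:ℝ)+1)) = 2 + 2*((1-α)/(m:ℝ)) := by
      rw [show gv m α * (2*((m:ℝ)+1)) = 2 * (gv m α * ((m:ℝ)+1)) by ring, hid]; ring
    linarith

lemma Tpair_le (n : ℕ) : Tcdf m α k n + Tcdf m α k (n+1) ≤ gv m α * (n:ℝ) := by
  have hd := dlt_pos (m := m) hm ha0 ha1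
  by_cases hA : n+1 ≤ 2*k-1
  · rw [Tval1 hm ha0 ha1 hk1 hkm n (by omega), Tval1 hm ha0 ha1 hk1 hkm (n+1) hA]
    have e : ((n/2 : ℕ) : ℝ) + (((n+1)/2 : ℕ) : ℝ) = (n:ℝ) := by
      have : (n/2 : ℕ) + ((n+1)/2 : ℕ) = n := by omega
      exact_mod_cast congrArg (Nat.cast : ℕ → ℝ) this
    rw [← mul_add, e]
  · by_cases hB : n = 2*k-1
    · subst hB
      have := Tpair_dip hm ha0 ha1 hk1 hkm
      have h2 : 2*k-1+1 = 2*k := by omega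
      rw [h2] at *
      linarith
    · by_cases hC : n ≤ 2*m
      · -- inside piece 2: exact line
        have hn : 2*k ≤ n := by omega
        rcases Nat.even_or_odd n with he | ho
        · obtain ⟨j, rfl⟩ := he
          rw [Tval2 hm ha0 ha1 hk1 hkm j (by omega) (by omega),
            show j+j+1 = 2*j+1 by ring]
          rw [Tval3 hm ha0 ha1 hk1 hkm j (by omega) (by omega)]
          have e : ((j+j : ℕ) : ℝ) = 2*(j:ℝ) := by push_cast; ring
          rw [e]; linarith
        · obtain ⟨j, rfl⟩ := ho
          rw [Tval3 hm ha0 ha1 hk1 hkm j (by omega) (by omega),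
            show 2*j+1+1 = (j+1)+(j+1) by ring]
          rw [Tval2 hm ha0 ha1 hk1 hkm (j+1) (by omega) (by omega)]
          push_cast
          ring_nf
          linarith
      · have := Tpair_top hm ha0 ha1 hk1 hkm n (by omega)
        linarith

lemma ppos_dip : 0 < Tcdf m α k (2*k) - Tcdf m α k (2*k-1) := by
  have hg := gv_pos (m := m) hm ha0 ha1
  have hd := dlt_pos (m := m) hm ha0 ha1
  have h2g := two_dlt_lt_gv (m := m) hm ha0 ha1
  have h1 : Tcdf m α k (2*k-1) = gv m α * ((k-1 : ℕ) : ℝ) := by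
    rw [Tval1 hm ha0 ha1 hk1 hkm (2*k-1) (le_refl _)]
    congr 2
    omega
  have h2 : Tcdf m α k (2*k) = gv m α * (k:ℝ) - dlt m α := by
    have := Tval2 hm ha0 ha1 hk1 hkm k (by omega) (by omega)
    rwa [show k+k = 2*k by ring] at this
  rw [h1, h2]
  have e1 : ((k-1 : ℕ) : ℝ) = (k:ℝ) - 1 := by
    have : (1:ℕ) ≤ k := hk1
    push_cast [this]; ring
  rw [e1]
  ring_nf
  linarith

omit hk1 hkm in
lemma ppos_even (j : ℕ) (hj : 1 ≤ j) (hjm : j ≤ m) :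
    0 < Tcdf m α 1 (j+j+1) - Tcdf m α 1 (j+j) := by
  have hd := dlt_pos (m := m) hm ha0 ha1
  rw [Tval2 hm ha0 ha1 (le_refl 1) hm j (by omega) (by omega),
    show j+j+1 = 2*j+1 by ring, Tval3 hm ha0 ha1 (le_refl 1) hm j (by omega) (by omega)]
  linarith

omit hk1 hkm in
lemma ppos_top : 0 < Tcdf m α 1 (2*m+2) - Tcdf m α 1 (2*m+1) := by
  have hr := dlt_lt_r (m := m) hm ha0 ha1
  rw [Tcdf_top hm ha0 ha1 (le_refl 1) hm (2*m+2) (by omega), Tcdf_2m1 hm ha0 ha1 (le_refl 1) hm,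
    gv_m_id (m := m) hm ha0 ha1]
  linarith

end xdd3

section glue

lemma sum_2i2 (M : ℕ) : ∑ i ∈ Finset.range M, (2*(i:ℝ)+2) = (M:ℝ)*((M:ℝ)+1) := by
  induction M with
  | zero => simp
  | succ M ih =>
    rw [Finset.sum_range_succ, ih]
    push_cast
    ring

/-- affine tsum against a strategy's pmf. -/
lemma tsum_affine (Z : Strategy) (c1 c2 : ℝ) :
    ∑' n, Z.p n * (c1 + c2*(n:ℝ)) = c1 + c2 * Z.exp := by
  have hcongr : ∀ n, Z.p n * (c1 + c2*(n:ℝ)) = c1 * Z.p n + c2 * ((n:ℝ) * Z.p n) := by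
    intro n; ring
  rw [tsum_congr hcongr,
    Summable.tsum_add ((summable_p Z).mul_left c1) (Z.finExp.mul_left c2),
    tsum_mul_left, tsum_mul_left, tsum_p]
  unfold Strategy.exp
  ring

lemma summable_affine (Z : Strategy) (c1 c2 : ℝ) :
    Summable (fun n => Z.p n * (c1 + c2*(n:ℝ))) := by
  have h := ((summable_p Z).mul_left c1).add (Z.finExp.mul_left c2)
  apply h.congr
  intro n; ring

lemma tsum_nonneg_zero (f : ℕ → ℝ) (hs : Summable f) (hnn : ∀ n, 0 ≤ f n)
    (h0 : ∑' n, f n ≤ 0) : ∀ n, f n = 0 := by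
  intro n
  have h1 := Summable.le_tsum hs n (fun j _ => hnn j)
  have := hnn n
  linarith

end glue

end AllPay81

/-- Lemma 8.1: necessary conditions for an equilibrium with
`E(X) = m + α`, `E(Y) = b`, `0 < b ≤ m`, `α ∈ (0,1)`. -/
theorem allpay_lemma81 (v1 v2 : ℝ) (hv1 : 0 < v1) (hv2 : 0 < v2)
    (m : ℕ) (hm : 1 ≤ m) (b α : ℝ) (hb0 : 0 < b) (hbm : b ≤ (m : ℝ))
    (hα0 : 0 < α) (hα1 : α < 1)
    (X Y : Strategy) (hX : X.exp = (m : ℝ) + α) (hY : Y.exp = b)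
    (h : IsNashAPA v1 v2 X Y) :
    (m : ℝ) * ((m : ℝ) + 1) / b = v1 / 2 ∧
    IsNashLotto ((m : ℝ) + α) b X Y ∧
    (∀ n, Y.p n = (1 - b / (m : ℝ)) * deltaFn 0 n + (b / (m : ℝ)) * UE m n) := by
  classical
  open AllPay81 in
  have hm0 : (0:ℝ) < (m:ℝ) := hM0 hm
  have hm1 : (0:ℝ) < (m:ℝ)+1 := by linarith
  have hmm1 : (0:ℝ) < (m:ℝ)*((m:ℝ)+1) := by positivity
  set P : ℝ := payoff v1 X Y with hPdef
  set Q : ℝ := payoff v2 Y X with hQdef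
  -- pointwise pure-deviation bounds
  have hGle : ∀ j : ℕ, AllPay81.sfun Y j ≤ 2/v1 * (P + j) := by
    intro j
    have h1 := h.1 (AllPay81.delta j)
    rw [AllPay81.payoff_delta] at h1
    have h2 : v1/2 * AllPay81.sfun Y j ≤ P + j := by linarith
    have h3 : AllPay81.sfun Y j = 2/v1 * (v1/2 * AllPay81.sfun Y j) := by
      field_simp
    rw [h3]
    apply mul_le_mul_of_nonneg_left h2 (by positivity)
  have hDle : ∀ j : ℕ, AllPay81.sfun X j ≤ 2/v2 * (Q + j) := by
    intro j
    have h1 := h.2 (AllPay81.delta j)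
    rw [AllPay81.payoff_delta] at h1
    have h2 : v2/2 * AllPay81.sfun X j ≤ Q + j := by linarith
    have h3 : AllPay81.sfun X j = 2/v2 * (v2/2 * AllPay81.sfun X j) := by
      field_simp
    rw [h3]
    apply mul_le_mul_of_nonneg_left h2 (by positivity)
  -- identities for equilibrium sSum values
  have hsXY : AllPay81.sSum X Y = 2/v1 * (P + ((m:ℝ)+α)) := by
    have h1 : P = v1/2 * AllPay81.sSum X Y - ((m:ℝ)+α) := by
      rw [hPdef, AllPay81.payoff_eq_sSum, hX]
    rw [h1]
    field_simp
    ring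
  have hsYX : AllPay81.sSum Y X = 2/v2 * (Q + b) := by
    have h1 : Q = v2/2 * AllPay81.sSum Y X - b := by
      rw [hQdef, AllPay81.payoff_eq_sSum, hY]
    rw [h1]
    field_simp
    ring
  -- general one-sided optimality
  have hXside : ∀ Z : Strategy, Z.exp = (m:ℝ)+α → AllPay81.sSum Z Y ≤ AllPay81.sSum X Y := by
    intro Z hZ
    have hle : ∀ n, Z.p n * AllPay81.sfun Y n ≤ Z.p n * (2/v1*P + (2/v1)*(n:ℝ)) := by
      intro n
      have := hGle n
      have h2 : 2/v1 * (P + (n:ℝ)) = 2/v1*P + (2/v1)*(n:ℝ) := by ring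
      rw [← h2]
      exact mul_le_mul_of_nonneg_left this (Z.nonneg n)
    have := Summable.tsum_le_tsum hle (AllPay81.summable_mul_sfun Z Y)
      (AllPay81.summable_affine Z (2/v1*P) (2/v1))
    rw [AllPay81.tsum_affine Z (2/v1*P) (2/v1), hZ] at this
    calc AllPay81.sSum Z Y = ∑' n, Z.p n * AllPay81.sfun Y n := rfl
      _ ≤ 2/v1*P + 2/v1 * ((m:ℝ)+α) := this
      _ = 2/v1 * (P + ((m:ℝ)+α)) := by ring
      _ = AllPay81.sSum X Y := hsXY.symm
  have hYside : ∀ Z : Strategy, Z.exp = b → AllPay81.sSum Z X ≤ AllPay81.sSum Y X := by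
    intro Z hZ
    have hle : ∀ n, Z.p n * AllPay81.sfun X n ≤ Z.p n * (2/v2*Q + (2/v2)*(n:ℝ)) := by
      intro n
      have := hDle n
      have h2 : 2/v2 * (Q + (n:ℝ)) = 2/v2*Q + (2/v2)*(n:ℝ) := by ring
      rw [← h2]
      exact mul_le_mul_of_nonneg_left this (Z.nonneg n)
    have := Summable.tsum_le_tsum hle (AllPay81.summable_mul_sfun Z X)
      (AllPay81.summable_affine Z (2/v2*Q) (2/v2))
    rw [AllPay81.tsum_affine Z (2/v2*Q) (2/v2), hZ] at this
    calc AllPay81.sSum Z X = ∑' n, Z.p n * AllPay81.sfun X n := rfl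
      _ ≤ 2/v2*Q + 2/v2 * b := this
      _ = 2/v2 * (Q + b) := by ring
      _ = AllPay81.sSum Y X := hsYX.symm
  -- test objects
  set Ys : Strategy := AllPay81.Ystar m b hm hb0 hbm with hYsdef
  -- Step B : sSum X Ys ≤ 2 − g b
  have hsfunYs : ∀ n, AllPay81.sfun Ys n = AllPay81.Scdf m b n + AllPay81.Scdf m b (n+1) := by
    intro n
    unfold AllPay81.sfun
    rw [hYsdef, AllPay81.Ystar_cdf, AllPay81.Ystar_cdf]
  have hB : AllPay81.sSum X Ys ≤ 2 - AllPay81.gv m α * b := by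
    have hle : ∀ n, X.p n * AllPay81.sfun Ys n
        ≤ X.p n * ((2*(1 - b/((m:ℝ)+1)) - b/((m:ℝ)*((m:ℝ)+1)))
          + (b/((m:ℝ)*((m:ℝ)+1))) * (n:ℝ)) := by
      intro n
      apply mul_le_mul_of_nonneg_left _ (X.nonneg n)
      rw [hsfunYs n]
      exact AllPay81.Ystar_sfun_le hm hb0 hbm n
    have h2 := Summable.tsum_le_tsum hle (AllPay81.summable_mul_sfun X Ys)
      (AllPay81.summable_affine X _ _)
    rw [AllPay81.tsum_affine X _ _, hX] at h2
    unfold AllPay81.sSum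
    have halg : (2*(1 - b/((m:ℝ)+1)) - b/((m:ℝ)*((m:ℝ)+1)))
        + (b/((m:ℝ)*((m:ℝ)+1))) * ((m:ℝ)+α) = 2 - AllPay81.gv m α * b := by
      unfold AllPay81.gv
      field_simp
      ring
    linarith [h2, halg.le, halg.ge]
  -- Step C : lower bound on sSum Y X
  have hC1 : AllPay81.gv m α * b ≤ AllPay81.sSum Ys X := by
    have := AllPay81.sSum_pair X Ys
    linarith
  have hC2 : AllPay81.gv m α * b ≤ AllPay81.sSum Y X :=
    le_trans hC1 (hYside Ys (AllPay81.Ystar_exp hm hb0 hbm))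
  have hC3 : AllPay81.sSum X Y ≤ 2 - AllPay81.gv m α * b := by
    have := AllPay81.sSum_pair X Y
    linarith
  -- Step D : per-k sandwich
  have hD : ∀ (k : ℕ) (hk1 : 1 ≤ k) (hkm : k ≤ m),
      AllPay81.sSum Y (AllPay81.Xdd m k α hm hα0 hα1 hk1 hkm) = AllPay81.gv m α * b ∧
      AllPay81.sSum (AllPay81.Xdd m k α hm hα0 hα1 hk1 hkm) Y = AllPay81.sSum X Y ∧
      AllPay81.sSum X Y = 2 - AllPay81.gv m α * b := by
    intro k hk1 hkm
    set Xk : Strategy := AllPay81.Xdd m k α hm hα0 hα1 hk1 hkm with hXkdef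
    have hsfunXk : ∀ c, AllPay81.sfun Xk c = AllPay81.Tcdf m α k c + AllPay81.Tcdf m α k (c+1) := by
      intro c
      unfold AllPay81.sfun
      rw [hXkdef, AllPay81.Xdd_cdf, AllPay81.Xdd_cdf]
    -- D1 : sSum Y Xk ≤ g b
    have hD1 : AllPay81.sSum Y Xk ≤ AllPay81.gv m α * b := by
      have hle : ∀ c, Y.p c * AllPay81.sfun Xk c ≤ Y.p c * (0 + AllPay81.gv m α * (c:ℝ)) := by
        intro c
        apply mul_le_mul_of_nonneg_left _ (Y.nonneg c)
        rw [hsfunXk c, zero_add]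
        exact AllPay81.Tpair_le hm hα0 hα1 hk1 hkm c
      have h2 := Summable.tsum_le_tsum hle (AllPay81.summable_mul_sfun Y Xk)
        (AllPay81.summable_affine Y 0 (AllPay81.gv m α))
      rw [AllPay81.tsum_affine Y 0 (AllPay81.gv m α), hY, zero_add] at h2
      exact h2
    -- D2+D3+D4
    have hXkexp : Xk.exp = (m:ℝ)+α := AllPay81.Xdd_exp hm hα0 hα1 hk1 hkm
    have hD2 : 2 - AllPay81.gv m α * b ≤ AllPay81.sSum Xk Y := by
      have := AllPay81.sSum_pair Xk Y
      linarith
    have hD3 : AllPay81.sSum Xk Y ≤ AllPay81.sSum X Y := hXside Xk hXkexp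
    have hEq1 : AllPay81.sSum X Y = 2 - AllPay81.gv m α * b := le_antisymm hC3 (by linarith)
    have hEq2 : AllPay81.sSum Xk Y = AllPay81.sSum X Y := by linarith
    have hEq3 : AllPay81.sSum Y Xk = AllPay81.gv m α * b := by
      have := AllPay81.sSum_pair Xk Y
      linarith
    exact ⟨hEq3, hEq2, hEq1⟩
  -- Step E : the s-function of Y is affine where some Xk has mass
  have hE : ∀ (k : ℕ) (hk1 : 1 ≤ k) (hkm : k ≤ m) (n : ℕ),
      (AllPay81.Xdd m k α hm hα0 hα1 hk1 hkm).p n ≠ 0 →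
      AllPay81.sfun Y n = 2/v1 * (P + n) := by
    intro k hk1 hkm
    set Xk : Strategy := AllPay81.Xdd m k α hm hα0 hα1 hk1 hkm with hXkdef
    obtain ⟨-, hEq2, hEq1⟩ := hD k hk1 hkm
    set f : ℕ → ℝ := fun n => Xk.p n * ((2/v1*P + (2/v1)*(n:ℝ)) - AllPay81.sfun Y n) with hfdef
    have hnn : ∀ n, 0 ≤ f n := by
      intro n
      apply mul_nonneg (Xk.nonneg n)
      have := hGle n
      have h2 : 2/v1 * (P + (n:ℝ)) = 2/v1*P + (2/v1)*(n:ℝ) := by ring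
      linarith [h2 ▸ this]
    have hsumf : Summable f := by
      have h1 := (AllPay81.summable_affine Xk (2/v1*P) (2/v1)).sub (AllPay81.summable_mul_sfun Xk Y)
      apply h1.congr
      intro n
      simp only [hfdef]
      ring
    have htsumf : ∑' n, f n ≤ 0 := by
      have h1 : ∑' n, f n = (2/v1*P + 2/v1*((m:ℝ)+α)) - AllPay81.sSum Xk Y := by
        have h2 : ∀ n, f n = Xk.p n * (2/v1*P + (2/v1)*(n:ℝ)) - Xk.p n * AllPay81.sfun Y n := by
          intro n; simp only [hfdef]; ring
        rw [tsum_congr h2,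
          Summable.tsum_sub (AllPay81.summable_affine Xk (2/v1*P) (2/v1)) (AllPay81.summable_mul_sfun Xk Y),
          AllPay81.tsum_affine Xk (2/v1*P) (2/v1), AllPay81.Xdd_exp hm hα0 hα1 hk1 hkm]
        rfl
      rw [h1, hEq2, hsXY]
      ring_nf
      norm_num
    have hzero := AllPay81.tsum_nonneg_zero f hsumf hnn htsumf
    intro n hpn
    have := hzero n
    simp only [hfdef] at this
    rcases mul_eq_zero.mp this with hc | hc
    · exact absurd hc hpn
    · have h2 : AllPay81.sfun Y n = 2/v1*P + (2/v1)*(n:ℝ) := by linarith [sub_eq_zero.mp hc]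
      rw [h2]; ring
  -- Step F : Y vanishes where the Xk-line is strictly above
  have hF : ∀ (k : ℕ) (hk1 : 1 ≤ k) (hkm : k ≤ m) (c : ℕ),
      AllPay81.gv m α * (c:ℝ)
        - AllPay81.sfun (AllPay81.Xdd m k α hm hα0 hα1 hk1 hkm) c ≠ 0 → Y.p c = 0 := by
    intro k hk1 hkm
    set Xk : Strategy := AllPay81.Xdd m k α hm hα0 hα1 hk1 hkm with hXkdef
    obtain ⟨hEq3, -, -⟩ := hD k hk1 hkm
    have hsfunXk : ∀ c, AllPay81.sfun Xk c = AllPay81.Tcdf m α k c + AllPay81.Tcdf m α k (c+1) := by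
      intro c
      unfold AllPay81.sfun
      rw [hXkdef, AllPay81.Xdd_cdf, AllPay81.Xdd_cdf]
    set f : ℕ → ℝ := fun c => Y.p c * (AllPay81.gv m α * (c:ℝ) - AllPay81.sfun Xk c) with hfdef
    have hnn : ∀ c, 0 ≤ f c := by
      intro c
      apply mul_nonneg (Y.nonneg c)
      have h1 := AllPay81.Tpair_le hm hα0 hα1 hk1 hkm c
      rw [hsfunXk c]
      linarith
    have hsumf : Summable f := by
      have h1 := (AllPay81.summable_affine Y 0 (AllPay81.gv m α)).sub
        (AllPay81.summable_mul_sfun Y Xk)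
      apply h1.congr
      intro c
      simp only [hfdef]
      ring
    have htsumf : ∑' c, f c ≤ 0 := by
      have h2 : ∀ c, f c = Y.p c * (0 + AllPay81.gv m α * (c:ℝ)) - Y.p c * AllPay81.sfun Xk c := by
        intro c; simp only [hfdef]; ring
      have h1 : ∑' c, f c = (0 + AllPay81.gv m α * b) - AllPay81.sSum Y Xk := by
        rw [tsum_congr h2,
          Summable.tsum_sub (AllPay81.summable_affine Y 0 (AllPay81.gv m α)) (AllPay81.summable_mul_sfun Y Xk),
          AllPay81.tsum_affine Y 0 (AllPay81.gv m α), hY]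
        rfl
      rw [h1, hEq3]
      ring_nf
      norm_num
    have hzero := AllPay81.tsum_nonneg_zero f hsumf hnn htsumf
    intro c hgap
    have := hzero c
    simp only [hfdef] at this
    rcases mul_eq_zero.mp this with hc | hc
    · exact hc
    · exact absurd hc hgap
  have hdpos := AllPay81.dlt_pos (m := m) (α := α) hm hα0 hα1
  -- odd kill
  have hodd : ∀ j : ℕ, 1 ≤ j → j ≤ m → Y.p (2*j-1) = 0 := by
    intro j hj1 hjm
    apply hF j hj1 hjm (2*j-1)
    have h1 := AllPay81.Tpair_dip hm hα0 hα1 hj1 hjm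
    have h2 : AllPay81.sfun (AllPay81.Xdd m j α hm hα0 hα1 hj1 hjm) (2*j-1)
        = AllPay81.Tcdf m α j (2*j-1) + AllPay81.Tcdf m α j (2*j-1+1) := by
      unfold AllPay81.sfun
      rw [AllPay81.Xdd_cdf, AllPay81.Xdd_cdf]
    have h3 : 2*j-1+1 = 2*j := by omega
    rw [h3] at h2
    rw [h2]
    intro hzero
    rw [sub_eq_zero] at hzero
    linarith [h1, hzero.ge, hzero.le]
  -- top kill
  have htop : ∀ c : ℕ, 2*m+1 ≤ c → Y.p c = 0 := by
    intro c hc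
    apply hF 1 (le_refl 1) hm c
    have h1 := AllPay81.Tpair_top hm hα0 hα1 (le_refl 1) hm c hc
    have h2 : AllPay81.sfun (AllPay81.Xdd m 1 α hm hα0 hα1 (le_refl 1) hm) c
        = AllPay81.Tcdf m α 1 c + AllPay81.Tcdf m α 1 (c+1) := by
      unfold AllPay81.sfun
      rw [AllPay81.Xdd_cdf, AllPay81.Xdd_cdf]
    rw [h2]
    intro hzero
    rw [sub_eq_zero] at hzero
    linarith [hzero.ge, hzero.le]
  -- affine structure of sfun Y on [1, 2m+1]
  have hsaff : ∀ n : ℕ, 1 ≤ n → n ≤ 2*m+1 → AllPay81.sfun Y n = 2/v1 * (P + n) := by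
    intro n h1 h2
    rcases Nat.even_or_odd n with he | ho
    · -- even : use k = 1
      obtain ⟨j, rfl⟩ := he
      have hj1 : 1 ≤ j := by omega
      have hjm : j ≤ m := by omega
      apply hE 1 (le_refl 1) hm (j+j)
      show AllPay81.Tcdf m α 1 (j+j+1) - AllPay81.Tcdf m α 1 (j+j) ≠ 0
      have := AllPay81.ppos_even hm hα0 hα1 j hj1 hjm
      linarith
    · obtain ⟨j, rfl⟩ := ho
      by_cases hj : 2*j+1 = 2*m+1
      · -- n = 2m+1 : use k = 1, top mass
        rw [hj]
        apply hE 1 (le_refl 1) hm (2*m+1)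
        show AllPay81.Tcdf m α 1 (2*m+1+1) - AllPay81.Tcdf m α 1 (2*m+1) ≠ 0
        have := AllPay81.ppos_top hm hα0 hα1
        have he : 2*m+1+1 = 2*m+2 := by omega
        rw [he]
        linarith
      · -- odd ≤ 2m−1 : use k = j+1, dip mass
        have hk1 : 1 ≤ j+1 := by omega
        have hkm : j+1 ≤ m := by omega
        apply hE (j+1) hk1 hkm (2*j+1)
        show AllPay81.Tcdf m α (j+1) (2*j+1+1) - AllPay81.Tcdf m α (j+1) (2*j+1) ≠ 0
        have := AllPay81.ppos_dip hm hα0 hα1 hk1 hkm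
        have e1 : 2*(j+1) = 2*j+1+1 := by omega
        have e2 : 2*(j+1)-1 = 2*j+1 := by omega
        rw [e2, e1] at this
        linarith
  -- pair sums are constant
  have hpair : ∀ n : ℕ, 1 ≤ n → n ≤ 2*m → Y.p n + Y.p (n+1) = 2/v1 := by
    intro n h1 h2
    have ha := hsaff n h1 (by omega)
    have hb' := hsaff (n+1) (by omega) (by omega)
    have hc := AllPay81.sfun_succ_sub Y n
    rw [ha, hb'] at hc
    rw [← hc]
    push_cast
    ring
  -- even values
  have heven : ∀ j : ℕ, 1 ≤ j → j ≤ m → Y.p (2*j) = 2/v1 := by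
    intro j hj1 hjm
    have h1 := hpair (2*j-1) (by omega) (by omega)
    have h2 : 2*j-1+1 = 2*j := by omega
    rw [h2, hodd j hj1 hjm, zero_add] at h1
    exact h1
  -- mass identity
  have hmass : Y.p 0 + (m:ℝ) * (2/v1) = 1 := by
    have h1 : ∑' n, Y.p n = ∑ n ∈ Finset.range (2*m+1), Y.p n :=
      tsum_eq_sum (by
        intro n hn
        simp only [Finset.mem_range, not_lt] at hn
        exact htop n (by omega))
    rw [AllPay81.tsum_p Y] at h1
    rw [AllPay81H.pair_sum Y.p m] at h1
    have h2 : ∀ i ∈ Finset.range m, Y.p (2*i+1) + Y.p (2*i+2) = 2/v1 := by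
      intro i hi
      simp only [Finset.mem_range] at hi
      exact hpair (2*i+1) (by omega) (by omega)
    rw [Finset.sum_congr rfl h2, Finset.sum_const, Finset.card_range, nsmul_eq_mul] at h1
    linarith
  -- mean identity
  have hmean : (2/v1) * ((m:ℝ)*((m:ℝ)+1)) = b := by
    have h1 : Y.exp = ∑ n ∈ Finset.range (2*m+1), (n:ℝ) * Y.p n := by
      unfold Strategy.exp
      exact tsum_eq_sum (by
        intro n hn
        simp only [Finset.mem_range, not_lt] at hn
        rw [htop n (by omega), mul_zero])
    rw [hY] at h1
    rw [AllPay81H.pair_sum (fun n => (n:ℝ) * Y.p n) m] at h1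
    have h2 : ∀ i ∈ Finset.range m,
        ((2*i+1 : ℕ):ℝ) * Y.p (2*i+1) + ((2*i+2 : ℕ):ℝ) * Y.p (2*i+2)
          = (2*(i:ℝ)+2) * (2/v1) := by
      intro i hi
      simp only [Finset.mem_range] at hi
      have ho : Y.p (2*i+1) = 0 := by
        have := hodd (i+1) (by omega) (by omega)
        have e : 2*(i+1)-1 = 2*i+1 := by omega
        rwa [e] at this
      have hev : Y.p (2*i+2) = 2/v1 := by
        have := heven (i+1) (by omega) (by omega)
        have e : 2*(i+1) = 2*i+2 := by omega
        rwa [e] at this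
      rw [ho, hev]
      push_cast
      ring
    rw [Finset.sum_congr rfl h2, ← Finset.sum_mul, AllPay81.sum_2i2 m] at h1
    simp only [Nat.cast_zero, zero_mul, zero_add] at h1
    linarith
  -- conclusion 1
  have hconc1 : (m:ℝ) * ((m:ℝ) + 1) / b = v1 / 2 := by
    rw [div_eq_div_iff (ne_of_gt hb0) (by norm_num : (2:ℝ) ≠ 0)]
    have hv1' : v1 ≠ 0 := ne_of_gt hv1
    field_simp at hmean
    linarith
  have h2v1 : 2/v1 = b / ((m:ℝ)*((m:ℝ)+1)) := by
    have hv1' : v1 ≠ 0 := ne_of_gt hv1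
    rw [eq_div_iff (ne_of_gt hmm1)]
    field_simp at hmean ⊢
    linarith
  refine ⟨hconc1, ⟨hX, hY, ?_, ?_⟩, ?_⟩
  · -- Lotto X side
    intro X' hX'
    rw [AllPay81.Hval_eq_sSum, AllPay81.Hval_eq_sSum]
    exact sub_le_sub_right (hXside X' hX') 1
  · -- Lotto Y side
    intro Y' hY'
    rw [AllPay81.Hval_eq_sSum, AllPay81.Hval_eq_sSum]
    exact sub_le_sub_right (hYside Y' hY') 1
  · -- conclusion 3 : the pmf of Y
    intro n
    rcases Nat.eq_zero_or_pos n with rfl | hn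
    · -- n = 0
      have hd0 : deltaFn 0 0 = 1 := by simp [deltaFn]
      have hUE0 : UE m 0 = ((m:ℝ)+1)⁻¹ := by
        simp only [UE]
        rw [if_pos ⟨Even.zero, by omega⟩]
      rw [hd0, hUE0]
      have h1 : Y.p 0 = 1 - (m:ℝ) * (2/v1) := by linarith
      rw [h1, h2v1]
      field_simp
      try ring
    · have hd : deltaFn 0 n = 0 := by simp [deltaFn]; omega
      rw [hd]
      by_cases hc : n ≤ 2*m
      · rcases Nat.even_or_odd n with he | ho
        · obtain ⟨j, rfl⟩ := he
          have hj1 : 1 ≤ j := by omega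
          have hUE : UE m (j+j) = ((m:ℝ)+1)⁻¹ := by
            simp only [UE]
            rw [if_pos ⟨⟨j, rfl⟩, by omega⟩]
          rw [hUE]
          have h1 : Y.p (j+j) = 2/v1 := by
            have := heven j hj1 (by omega)
            rwa [show 2*j = j+j by ring] at this
          rw [h1, h2v1]
          field_simp
          try ring
        · obtain ⟨j, rfl⟩ := ho
          have hUE : UE m (2*j+1) = 0 := by
            simp only [UE]
            rw [if_neg (by rintro ⟨⟨t, ht⟩, -⟩; omega)]
          rw [hUE]
          have h1 : Y.p (2*j+1) = 0 := by
            have := hodd (j+1) (by omega) (by omega)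
            rwa [show 2*(j+1)-1 = 2*j+1 by omega] at this
          rw [h1]
          ring
      · have hUE : UE m n = 0 := by
          simp only [UE]
          rw [if_neg (by rintro ⟨-, hle⟩; omega)]
        rw [hUE, htop n (by omega)]
        ring
end

section
/- Let v1 ≥ v2 > 0. If (X, Y) and (X', Y') are both Nash equilibria of the two-player all-pay auction with valuations (v1, v2), then (X, Y') and (X', Y) are also Nash equilibria of the two-player all-pay auction with valuations (v1, v2) (equilibria are interchangeable). -/
open scoped BigOperators

/-- Auxiliary: a sum over pairs supported on the lower triangle equals `prGT`. -/
lemma tsum_lower_aux (ξ η : Strategy) (e : ℕ × ℕ → ℝ)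
    (he : ∀ p, e p = if p.2 < p.1 then ξ.p p.1 * η.p p.2 else 0)
    (hse : Summable e) : (∑' p, e p) = prGT ξ η := by
  have hinner : ∀ n : ℕ, Summable fun k => e (n, k) := by
    intro n
    apply summable_of_ne_finset_zero (s := Finset.range n)
    intro k hk
    simp only [Finset.mem_range, not_lt] at hk
    rw [he]
    simp [not_lt_of_ge hk]
  rw [Summable.tsum_prod' hse hinner]
  unfold prGT
  congr 1; funext n
  rw [tsum_eq_sum (s := Finset.range n) (fun k hk => by
    simp only [Finset.mem_range, not_lt] at hk
    rw [he]; simp [not_lt_of_ge hk])]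
  rw [Finset.mul_sum]
  refine Finset.sum_congr rfl fun k hk => ?_
  simp only [Finset.mem_range] at hk
  rw [he]; simp [hk]

/-- Key probabilistic identity: `Pr(X>Y) + Pr(X<Y) + Pr(X=Y) = 1`. -/
lemma prob_trichotomy (ξ η : Strategy) :
    prGT ξ η + prGT η ξ + prEq ξ η = 1 := by
  classical
  have hFsum : Summable (fun p : ℕ × ℕ => ξ.p p.1 * η.p p.2) :=
    ξ.total.summable.mul_of_nonneg η.total.summable ξ.nonneg η.nonneg
  have hF1 : HasSum (fun p : ℕ × ℕ => ξ.p p.1 * η.p p.2) 1 := by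
    simpa using ξ.total.mul η.total hFsum
  have hFnn : ∀ p : ℕ × ℕ, 0 ≤ ξ.p p.1 * η.p p.2 := fun p =>
    mul_nonneg (ξ.nonneg _) (η.nonneg _)
  set A : ℕ × ℕ → ℝ := fun p => if p.2 < p.1 then ξ.p p.1 * η.p p.2 else 0 with hA
  set B : ℕ × ℕ → ℝ := fun p => if p.1 < p.2 then ξ.p p.1 * η.p p.2 else 0 with hB
  set C : ℕ × ℕ → ℝ := fun p => if p.1 = p.2 then ξ.p p.1 * η.p p.2 else 0 with hC
  have nnA : ∀ p, 0 ≤ A p := fun p => by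
    rw [hA]; dsimp only; split
    · exact hFnn p
    · exact le_rfl
  have leA : ∀ p, A p ≤ ξ.p p.1 * η.p p.2 := fun p => by
    rw [hA]; dsimp only; split
    · exact le_rfl
    · exact hFnn p
  have nnB : ∀ p, 0 ≤ B p := fun p => by
    rw [hB]; dsimp only; split
    · exact hFnn p
    · exact le_rfl
  have leB : ∀ p, B p ≤ ξ.p p.1 * η.p p.2 := fun p => by
    rw [hB]; dsimp only; split
    · exact le_rfl
    · exact hFnn p
  have nnC : ∀ p, 0 ≤ C p := fun p => by
    rw [hC]; dsimp only; split
    · exact hFnn p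
    · exact le_rfl
  have leC : ∀ p, C p ≤ ξ.p p.1 * η.p p.2 := fun p => by
    rw [hC]; dsimp only; split
    · exact le_rfl
    · exact hFnn p
  have sA : Summable A := Summable.of_nonneg_of_le nnA leA hFsum
  have sB : Summable B := Summable.of_nonneg_of_le nnB leB hFsum
  have sC : Summable C := Summable.of_nonneg_of_le nnC leC hFsum
  have hsplit : (fun p : ℕ × ℕ => ξ.p p.1 * η.p p.2) = fun p => A p + B p + C p := by
    funext p
    rcases lt_trichotomy p.1 p.2 with h | h | h
    · simp [hA, hB, hC, h, not_lt_of_gt h, ne_of_lt h]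
    · simp [hA, hB, hC, h, lt_irrefl]
    · simp [hA, hB, hC, h, not_lt_of_gt h, (ne_of_lt h).symm]
  have hsum : (∑' p, A p) + (∑' p, B p) + (∑' p, C p) = 1 := by
    have h1 : ∑' p : ℕ × ℕ, (A p + B p + C p) = 1 := by
      rw [← hsplit]; exact hF1.tsum_eq
    rw [Summable.tsum_add (sA.add sB) sC, Summable.tsum_add sA sB] at h1
    exact h1
  have hAval : (∑' p, A p) = prGT ξ η :=
    tsum_lower_aux ξ η A (fun p => rfl) sA
  have hBval : (∑' p, B p) = prGT η ξ := by
    set f : ℕ × ℕ → ℝ := fun p => if p.2 < p.1 then η.p p.1 * ξ.p p.2 else 0 with hf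
    have hGnn : ∀ p : ℕ × ℕ, 0 ≤ η.p p.1 * ξ.p p.2 := fun p =>
      mul_nonneg (η.nonneg _) (ξ.nonneg _)
    have sf : Summable f := by
      refine Summable.of_nonneg_of_le (fun p => ?_) (fun p => ?_)
        (η.total.summable.mul_of_nonneg ξ.total.summable η.nonneg ξ.nonneg)
      · rw [hf]; dsimp only
        split
        · exact hGnn p
        · exact le_rfl
      · rw [hf]; dsimp only
        split
        · exact le_rfl
        · exact hGnn p
    have key : ∀ c : ℕ × ℕ, f ((Equiv.prodComm ℕ ℕ) c) = B c := by
      intro c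
      rw [hf, hB]
      simp only [Equiv.prodComm_apply, Prod.fst_swap, Prod.snd_swap]
      split_ifs
      · rename_i hc; simp [hc, mul_comm]
      · rename_i hc; simp [hc]
    calc (∑' p, B p) = ∑' c, f ((Equiv.prodComm ℕ ℕ) c) := (tsum_congr key).symm
      _ = ∑' p, f p := (Equiv.prodComm ℕ ℕ).tsum_eq f
      _ = prGT η ξ := tsum_lower_aux η ξ f (fun p => rfl) sf
  have hCval : (∑' p, C p) = prEq ξ η := by
    have hinner : ∀ n : ℕ, Summable fun k => C (n, k) := by
      intro n
      apply summable_of_ne_finset_zero (s := {n})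
      intro k hk
      simp only [Finset.mem_singleton] at hk
      rw [hC]; simp [Ne.symm hk]
    rw [Summable.tsum_prod' sC hinner]
    unfold prEq
    congr 1; funext n
    rw [tsum_eq_single n (fun k hk => by rw [hC]; simp [Ne.symm hk])]
    rw [hC]; simp
  rw [hAval, hBval, hCval] at hsum
  exact hsum

/-- Payoff rewritten in terms of `Hval`. -/
lemma payoff_eq_Hval (v : ℝ) (ξ η : Strategy) :
    payoff v ξ η = v / 2 + v / 2 * Hval ξ η - ξ.exp := by
  have h := prob_trichotomy ξ η
  have hE : prEq ξ η = 1 - prGT ξ η - prGT η ξ := by linarith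
  unfold payoff Hval
  rw [hE]; ring

/-- equilibria of the all-pay auction are interchangeable. -/
theorem allpay_interchangeable (v1 v2 : ℝ) (hv2 : 0 < v2) (hv : v2 ≤ v1)
    (X Y X' Y' : Strategy)
    (h : IsNashAPA v1 v2 X Y) (h' : IsNashAPA v1 v2 X' Y') :
    IsNashAPA v1 v2 X Y' ∧ IsNashAPA v1 v2 X' Y := by
  obtain ⟨hX, hY⟩ := h
  obtain ⟨hX', hY'⟩ := h'
  have hv1 : 0 < v1 := lt_of_lt_of_le hv2 hv
  set g : Strategy → Strategy → ℝ :=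
    fun ξ η => Hval ξ η - (2 / v1) * ξ.exp + (2 / v2) * η.exp with hg
  have pay1 : ∀ ξ η : Strategy,
      payoff v1 ξ η = v1 / 2 + v1 / 2 * g ξ η - (v1 / v2) * η.exp := by
    intro ξ η
    rw [payoff_eq_Hval, hg]
    field_simp
    ring
  have pay2 : ∀ ξ η : Strategy,
      payoff v2 η ξ = v2 / 2 - v2 / 2 * g ξ η - (v2 / v1) * ξ.exp := by
    intro ξ η
    rw [payoff_eq_Hval]
    have hH : Hval η ξ = - Hval ξ η := by unfold Hval; ring
    rw [hH, hg]
    field_simp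
    ring
  have half1 : (0 : ℝ) < v1 / 2 := by linarith
  have half2 : (0 : ℝ) < v2 / 2 := by linarith
  -- translate Nash conditions into saddle-point conditions for g
  have s1 : ∀ ξ, g ξ Y ≤ g X Y := by
    intro ξ
    have hp := hX ξ
    rw [pay1, pay1] at hp
    have : v1 / 2 * g ξ Y ≤ v1 / 2 * g X Y := by linarith
    exact le_of_mul_le_mul_left this half1
  have s2 : ∀ η, g X Y ≤ g X η := by
    intro η
    have hp := hY η
    rw [pay2, pay2] at hp
    have : v2 / 2 * g X Y ≤ v2 / 2 * g X η := by linarith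
    exact le_of_mul_le_mul_left this half2
  have s1' : ∀ ξ, g ξ Y' ≤ g X' Y' := by
    intro ξ
    have hp := hX' ξ
    rw [pay1, pay1] at hp
    have : v1 / 2 * g ξ Y' ≤ v1 / 2 * g X' Y' := by linarith
    exact le_of_mul_le_mul_left this half1
  have s2' : ∀ η, g X' Y' ≤ g X' η := by
    intro η
    have hp := hY' η
    rw [pay2, pay2] at hp
    have : v2 / 2 * g X' Y' ≤ v2 / 2 * g X' η := by linarith
    exact le_of_mul_le_mul_left this half2
  -- the saddle values all coincide
  have c1 : g X Y ≤ g X Y' := s2 Y'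
  have c2 : g X Y' ≤ g X' Y' := s1' X
  have c3 : g X' Y' ≤ g X' Y := s2' Y
  have c4 : g X' Y ≤ g X Y := s1 X'
  have e1 : g X Y' = g X Y := by linarith
  have e2 : g X' Y = g X Y := by linarith
  have e3 : g X' Y' = g X Y := by linarith
  constructor
  · constructor
    · intro ξ
      rw [pay1, pay1]
      have hle : g ξ Y' ≤ g X Y' := by
        have := s1' ξ; linarith
      have hm := mul_le_mul_of_nonneg_left hle (le_of_lt half1)
      linarith
    · intro η
      rw [pay2, pay2]
      have : g X Y ≤ g X η := s2 η
      have hgle : g X Y' ≤ g X η := by linarith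
      have hm := mul_le_mul_of_nonneg_left hgle (le_of_lt half2)
      linarith
  · constructor
    · intro ξ
      rw [pay1, pay1]
      have hle : g ξ Y ≤ g X' Y := by
        have := s1 ξ; linarith
      have hm := mul_le_mul_of_nonneg_left hle (le_of_lt half1)
      linarith
    · intro η
      rw [pay2, pay2]
      have : g X' Y' ≤ g X' η := s2' η
      have hgle : g X' Y ≤ g X' η := by linarith
      have hm := mul_le_mul_of_nonneg_left hgle (le_of_lt half2)
      linarith
end

section
/- Let m be a positive integer, let j be an integer with 1 ≤ j ≤ m, let δ = (2m+1)/(m+1), and let α ∈ [0, (m+1)/(2m+1)]. Then for every strategy Y, H(αδ·V_j^m + (1−αδ)·U_O^m, Y) ≥ 1 − E(Y)·(1/(m+1) + (1−α)/(m(m+1))) + (α/(m+1))·Pr(Y = 2j−1), and equality holds whenever Pr(Y ≥ 2m+1) = 0. -/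
open scoped BigOperators

namespace H19aux

noncomputable def Zf (j m : ℕ) (α : ℝ) : ℕ → ℝ := fun n =>
  α * ((2 * (m : ℝ) + 1) / ((m : ℝ) + 1)) * Vfn j m n +
    (1 - α * ((2 * (m : ℝ) + 1) / ((m : ℝ) + 1))) * UO m n

noncomputable def cv (m : ℕ) (α : ℝ) : ℝ :=
  1 / ((m : ℝ) + 1) + (1 - α) / ((m : ℝ) * ((m : ℝ) + 1))

noncomputable def ev (m : ℕ) (α : ℝ) : ℝ := α / ((m : ℝ) + 1)

lemma Zf_eq (m j : ℕ) (hm : 1 ≤ m) (hj1 : 1 ≤ j) (hjm : j ≤ m) (α : ℝ) (k : ℕ) :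
    Zf j m α k =
      if k = 2 * j - 1 then
        α * ((2 * (m : ℝ) + 1) / ((m : ℝ) + 1)) * (2 * (m : ℝ) + 1)⁻¹ +
          (1 - α * ((2 * (m : ℝ) + 1) / ((m : ℝ) + 1))) * (m : ℝ)⁻¹
      else if k % 2 = 1 ∧ k < 2 * j - 1 then
        α * ((2 * (m : ℝ) + 1) / ((m : ℝ) + 1)) * (2 * (2 * (m : ℝ) + 1)⁻¹) +
          (1 - α * ((2 * (m : ℝ) + 1) / ((m : ℝ) + 1))) * (m : ℝ)⁻¹
      else if k % 2 = 1 ∧ k < 2 * m then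
        (1 - α * ((2 * (m : ℝ) + 1) / ((m : ℝ) + 1))) * (m : ℝ)⁻¹
      else if k % 2 = 0 ∧ 2 * j ≤ k ∧ k ≤ 2 * m then
        α * ((2 * (m : ℝ) + 1) / ((m : ℝ) + 1)) * (2 * (2 * (m : ℝ) + 1)⁻¹)
      else 0 := by
  simp only [Zf, Vfn, UO, Nat.odd_iff, Nat.even_iff]
  split_ifs <;> first | (exfalso; omega) | ring

lemma Zf_zero (m j : ℕ) (hm : 1 ≤ m) (hj1 : 1 ≤ j) (hjm : j ≤ m) (α : ℝ) (k : ℕ)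
    (hk : 2 * m < k) : Zf j m α k = 0 := by
  rw [Zf_eq m j hm hj1 hjm]
  split_ifs <;> first | (exfalso; omega) | rfl

lemma pair (m j : ℕ) (hm : 1 ≤ m) (hj1 : 1 ≤ j) (hjm : j ≤ m) (α : ℝ) (k : ℕ)
    (hk : k + 1 ≤ 2 * m) :
    Zf j m α k + Zf j m α (k + 1) =
      cv m α + ev m α * ((if k = 2 * j - 1 then (1 : ℝ) else 0) -
        (if k + 1 = 2 * j - 1 then (1 : ℝ) else 0)) := by
  have hM : (1 : ℝ) ≤ (m : ℝ) := by exact_mod_cast hm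
  have hM0 : ((m : ℝ)) ≠ 0 := by linarith
  have hM1 : ((m : ℝ) + 1) ≠ 0 := by linarith
  have hM2 : (2 * (m : ℝ) + 1) ≠ 0 := by linarith
  rw [Zf_eq m j hm hj1 hjm, Zf_eq m j hm hj1 hjm, cv, ev]
  split_ifs <;> first | (exfalso; omega) | (field_simp; ring)

lemma gkey (m j : ℕ) (hm : 1 ≤ m) (hj1 : 1 ≤ j) (hjm : j ≤ m) (α : ℝ) :
    ∀ d k, k + d = 2 * m →
      2 * (∑ n ∈ Finset.Ico (k + 1) (2 * m + 1), Zf j m α n) + Zf j m α k =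
        2 - cv m α * k + ev m α * (if k = 2 * j - 1 then (1 : ℝ) else 0) := by
  have hM : (1 : ℝ) ≤ (m : ℝ) := by exact_mod_cast hm
  have hM0 : ((m : ℝ)) ≠ 0 := by linarith
  have hM1 : ((m : ℝ) + 1) ≠ 0 := by linarith
  have hM2 : (2 * (m : ℝ) + 1) ≠ 0 := by linarith
  intro d
  induction d with
  | zero =>
    intro k hk
    have hk' : k = 2 * m := by omega
    subst hk'
    rw [Finset.Ico_self, Finset.sum_empty, Zf_eq m j hm hj1 hjm,
      if_neg (by omega), if_neg (by omega), if_neg (by omega), if_pos (by omega),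
      if_neg (by omega), cv, ev]
    push_cast
    field_simp
    ring
  | succ d ih =>
    intro k hk
    have hIH := ih (k + 1) (by omega)
    have hpr := pair m j hm hj1 hjm α k (by omega)
    rw [Finset.sum_eq_sum_Ico_succ_bot (by omega : k + 1 < 2 * m + 1)]
    push_cast at hIH ⊢
    linear_combination hpr + hIH

end H19aux

/-- lower bound for `H(αδ·V_j^m + (1−αδ)·U_O^m, Y)`, with equality
whenever `Y` puts no mass on `{2m+1, 2m+2, …}`. -/
theorem h_lower_bound_mix (m : ℕ) (hm : 1 ≤ m) (j : ℕ) (hj1 : 1 ≤ j) (hjm : j ≤ m)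
    (α : ℝ) (hα0 : 0 ≤ α) (hα1 : α ≤ ((m : ℝ) + 1) / (2 * (m : ℝ) + 1))
    (Z : Strategy)
    (hZ : ∀ n, Z.p n = α * ((2 * (m : ℝ) + 1) / ((m : ℝ) + 1)) * Vfn j m n +
      (1 - α * ((2 * (m : ℝ) + 1) / ((m : ℝ) + 1))) * UO m n)
    (Y : Strategy) :
    1 - Y.exp * (1 / ((m : ℝ) + 1) + (1 - α) / ((m : ℝ) * ((m : ℝ) + 1))) +
        (α / ((m : ℝ) + 1)) * Y.p (2 * j - 1) ≤ Hval Z Y ∧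
    ((∀ n, 2 * m + 1 ≤ n → Y.p n = 0) →
      Hval Z Y =
        1 - Y.exp * (1 / ((m : ℝ) + 1) + (1 - α) / ((m : ℝ) * ((m : ℝ) + 1))) +
          (α / ((m : ℝ) + 1)) * Y.p (2 * j - 1)) := by
  classical
  have hM : (1 : ℝ) ≤ (m : ℝ) := by exact_mod_cast hm
  have hM0 : ((m : ℝ)) ≠ 0 := by linarith
  have hM1 : ((m : ℝ) + 1) ≠ 0 := by linarith
  have hZf : ∀ n, Z.p n = H19aux.Zf j m α n := fun n => hZ n
  have hZ0 : ∀ n, 2 * m < n → Z.p n = 0 := fun n hn => by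
    rw [hZf]; exact H19aux.Zf_zero m j hm hj1 hjm α n hn
  have hZs1 : ∑ n ∈ Finset.range (2 * m + 1), Z.p n = 1 := by
    rw [← tsum_eq_sum (L := SummationFilter.unconditional ℕ) (s := Finset.range (2 * m + 1))
      (fun n hn => hZ0 n (by simp [Finset.mem_range] at hn; omega))]
    exact Z.total.tsum_eq
  -- Step 1 : prGT Z Y as a finite sum
  have h1 : prGT Z Y = ∑ k ∈ Finset.range (2 * m + 1),
      Y.p k * (∑ n ∈ Finset.Ico (k + 1) (2 * m + 1), Z.p n) := by
    rw [prGT, tsum_eq_sum (s := Finset.range (2 * m + 1))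
      (fun n hn => by rw [hZ0 n (by simp [Finset.mem_range] at hn; omega), zero_mul])]
    calc ∑ n ∈ Finset.range (2 * m + 1), Z.p n * ∑ k ∈ Finset.range n, Y.p k
        = ∑ n ∈ Finset.range (2 * m + 1), ∑ k ∈ Finset.range n, Z.p n * Y.p k := by
          exact Finset.sum_congr rfl fun n _ => Finset.mul_sum _ _ _
      _ = ∑ k ∈ Finset.range (2 * m + 1),
            ∑ n ∈ Finset.Ico (k + 1) (2 * m + 1), Z.p n * Y.p k := by
          rw [Finset.sum_sigma', Finset.sum_sigma']
          apply Finset.sum_nbij' (fun p => ⟨p.2, p.1⟩) (fun p => ⟨p.2, p.1⟩) <;>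
            simp <;> omega
      _ = ∑ k ∈ Finset.range (2 * m + 1),
            Y.p k * ∑ n ∈ Finset.Ico (k + 1) (2 * m + 1), Z.p n := by
          refine Finset.sum_congr rfl fun k _ => ?_
          rw [Finset.mul_sum]
          exact Finset.sum_congr rfl fun n _ => mul_comm _ _
  -- partial-sum identity for Z
  have hSD : ∀ n : ℕ, ∑ k ∈ Finset.range n, Z.p k =
      1 - ∑ k ∈ Finset.Ico n (2 * m + 1), Z.p k := by
    intro n
    rcases le_or_gt n (2 * m + 1) with h | h
    · have h3 := Finset.sum_range_add_sum_Ico Z.p h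
      linarith [h3, hZs1]
    · have h2 : Finset.Ico n (2 * m + 1) = ∅ := Finset.Ico_eq_empty (by omega)
      have h3 := Finset.sum_range_add_sum_Ico Z.p (le_of_lt h)
      have h4 : ∑ k ∈ Finset.Ico (2 * m + 1) n, Z.p k = 0 :=
        Finset.sum_eq_zero fun k hk => hZ0 k (by simp [Finset.mem_Ico] at hk; omega)
      rw [h2, Finset.sum_empty]
      linarith [h3, hZs1, h4]
  have hDzero : ∀ n ∉ Finset.range (2 * m + 1),
      Y.p n * ∑ k ∈ Finset.Ico n (2 * m + 1), Z.p k = 0 := by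
    intro n hn
    have : Finset.Ico n (2 * m + 1) = ∅ :=
      Finset.Ico_eq_empty (by simp [Finset.mem_range] at hn; omega)
    rw [this, Finset.sum_empty, mul_zero]
  have hDsummable : Summable (fun n => Y.p n * ∑ k ∈ Finset.Ico n (2 * m + 1), Z.p k) :=
    summable_of_ne_finset_zero hDzero
  -- Step 2 : prGT Y Z
  have h2 : prGT Y Z = 1 - ∑ n ∈ Finset.range (2 * m + 1),
      Y.p n * ∑ k ∈ Finset.Ico n (2 * m + 1), Z.p k := by
    rw [prGT]
    have e1 : ∀ n : ℕ, Y.p n * ∑ k ∈ Finset.range n, Z.p k =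
        Y.p n - Y.p n * ∑ k ∈ Finset.Ico n (2 * m + 1), Z.p k := by
      intro n; rw [hSD n]; ring
    rw [tsum_congr e1, Summable.tsum_sub Y.total.summable hDsummable, Y.total.tsum_eq,
      tsum_eq_sum hDzero]
  -- Hval as a finite sum
  have hsplit : ∑ k ∈ Finset.range (2 * m + 1),
      Y.p k * ((∑ n ∈ Finset.Ico (k + 1) (2 * m + 1), Z.p n) +
        (∑ n ∈ Finset.Ico k (2 * m + 1), Z.p n)) =
      (∑ k ∈ Finset.range (2 * m + 1),
        Y.p k * ∑ n ∈ Finset.Ico (k + 1) (2 * m + 1), Z.p n) +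
      ∑ k ∈ Finset.range (2 * m + 1),
        Y.p k * ∑ n ∈ Finset.Ico k (2 * m + 1), Z.p n := by
    rw [← Finset.sum_add_distrib]
    exact Finset.sum_congr rfl fun k _ => mul_add _ _ _
  have hHval : Hval Z Y = ∑ k ∈ Finset.range (2 * m + 1),
      Y.p k * ((∑ n ∈ Finset.Ico (k + 1) (2 * m + 1), Z.p n) +
        (∑ n ∈ Finset.Ico k (2 * m + 1), Z.p n)) - 1 := by
    rw [Hval, h1, h2, hsplit]; ring
  -- pointwise evaluation
  have hgk : ∀ k ∈ Finset.range (2 * m + 1),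
      Y.p k * ((∑ n ∈ Finset.Ico (k + 1) (2 * m + 1), Z.p n) +
        (∑ n ∈ Finset.Ico k (2 * m + 1), Z.p n)) =
      Y.p k * (2 - H19aux.cv m α * k +
        H19aux.ev m α * (if k = 2 * j - 1 then (1 : ℝ) else 0)) := by
    intro k hk
    have hk' : k < 2 * m + 1 := by simpa [Finset.mem_range] using hk
    have hD : (∑ n ∈ Finset.Ico k (2 * m + 1), Z.p n) =
        Z.p k + ∑ n ∈ Finset.Ico (k + 1) (2 * m + 1), Z.p n :=
      Finset.sum_eq_sum_Ico_succ_bot hk' _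
    have hZsum : (∑ n ∈ Finset.Ico (k + 1) (2 * m + 1), Z.p n) =
        ∑ n ∈ Finset.Ico (k + 1) (2 * m + 1), H19aux.Zf j m α n :=
      Finset.sum_congr rfl fun n _ => hZf n
    have hg := H19aux.gkey m j hm hj1 hjm α (2 * m - k) k (by omega)
    rw [hD, hZsum, hZf k]
    linear_combination (Y.p k) * hg
  -- Hval in terms of S, T
  have hfin : Hval Z Y = 2 * (∑ k ∈ Finset.range (2 * m + 1), Y.p k) -
      H19aux.cv m α * (∑ k ∈ Finset.range (2 * m + 1), (k : ℝ) * Y.p k) +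
      H19aux.ev m α * Y.p (2 * j - 1) - 1 := by
    rw [hHval, Finset.sum_congr rfl hgk]
    have e2 : ∀ k ∈ Finset.range (2 * m + 1),
        Y.p k * (2 - H19aux.cv m α * k +
          H19aux.ev m α * (if k = 2 * j - 1 then (1 : ℝ) else 0)) =
        (2 * Y.p k - H19aux.cv m α * ((k : ℝ) * Y.p k)) +
          H19aux.ev m α * (if k = 2 * j - 1 then Y.p k else 0) := by
      intro k _; split_ifs <;> ring
    rw [Finset.sum_congr rfl e2, Finset.sum_add_distrib, Finset.sum_sub_distrib,
      ← Finset.mul_sum, ← Finset.mul_sum, ← Finset.mul_sum,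
      Finset.sum_ite_eq' _ (2 * j - 1) Y.p, if_pos (by simp [Finset.mem_range]; omega)]
  -- tails
  set f1 : ℕ → ℝ := fun n => if n ∈ Finset.range (2 * m + 1) then 0 else Y.p n with hf1
  set f2 : ℕ → ℝ := fun n => if n ∈ Finset.range (2 * m + 1) then 0 else (n : ℝ) * Y.p n
    with hf2
  have hf1nonneg : ∀ n, 0 ≤ f1 n := fun n => by
    rw [hf1]; dsimp only; split_ifs; exacts [le_rfl, Y.nonneg n]
  have hf2nonneg : ∀ n, 0 ≤ f2 n := fun n => by
    rw [hf2]; dsimp only; split_ifs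
    exacts [le_rfl, mul_nonneg (Nat.cast_nonneg n) (Y.nonneg n)]
  have hf1le : ∀ n, f1 n ≤ Y.p n := fun n => by
    rw [hf1]; dsimp only; split_ifs; exacts [Y.nonneg n, le_rfl]
  have hf2le : ∀ n, f2 n ≤ (n : ℝ) * Y.p n := fun n => by
    rw [hf2]; dsimp only; split_ifs
    exacts [mul_nonneg (Nat.cast_nonneg n) (Y.nonneg n), le_rfl]
  have hf1sum : Summable f1 := Summable.of_nonneg_of_le hf1nonneg hf1le Y.total.summable
  have hf2sum : Summable f2 := Summable.of_nonneg_of_le hf2nonneg hf2le Y.finExp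
  have hsplit1 : (∑ k ∈ Finset.range (2 * m + 1), Y.p k) + ∑' n, f1 n = 1 := by
    have hpt : ∀ n, Y.p n =
        (if n ∈ Finset.range (2 * m + 1) then Y.p n else 0) + f1 n := by
      intro n; rw [hf1]; dsimp only; split_ifs <;> ring
    have hg1 : Summable (fun n => if n ∈ Finset.range (2 * m + 1) then Y.p n else 0) :=
      summable_of_ne_finset_zero (s := Finset.range (2 * m + 1)) fun n hn => if_neg hn
    have e3 : (1 : ℝ) = (∑' n, if n ∈ Finset.range (2 * m + 1) then Y.p n else 0) +
        ∑' n, f1 n := by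
      rw [← Summable.tsum_add hg1 hf1sum, ← tsum_congr hpt]
      exact Y.total.tsum_eq.symm
    have e4 : (∑' n, if n ∈ Finset.range (2 * m + 1) then Y.p n else 0) =
        ∑ k ∈ Finset.range (2 * m + 1), Y.p k := by
      rw [tsum_eq_sum (s := Finset.range (2 * m + 1)) fun n hn => if_neg hn]
      exact Finset.sum_congr rfl fun k hk => if_pos hk
    linarith [e3, e4]
  have hsplit2 : (∑ k ∈ Finset.range (2 * m + 1), (k : ℝ) * Y.p k) + ∑' n, f2 n =
      Y.exp := by
    have hpt : ∀ n : ℕ, (n : ℝ) * Y.p n =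
        (if n ∈ Finset.range (2 * m + 1) then (n : ℝ) * Y.p n else 0) + f2 n := by
      intro n; rw [hf2]; dsimp only; split_ifs <;> ring
    have hg1 : Summable (fun n =>
        if n ∈ Finset.range (2 * m + 1) then (n : ℝ) * Y.p n else 0) :=
      summable_of_ne_finset_zero (s := Finset.range (2 * m + 1)) fun n hn => if_neg hn
    have e3 : Y.exp = (∑' n, if n ∈ Finset.range (2 * m + 1) then (n : ℝ) * Y.p n else 0) +
        ∑' n, f2 n := by
      rw [← Summable.tsum_add hg1 hf2sum, ← tsum_congr hpt]; rfl
    have e4 : (∑' n, if n ∈ Finset.range (2 * m + 1) then (n : ℝ) * Y.p n else 0) =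
        ∑ k ∈ Finset.range (2 * m + 1), (k : ℝ) * Y.p k := by
      rw [tsum_eq_sum (s := Finset.range (2 * m + 1)) fun n hn => if_neg hn]
      exact Finset.sum_congr rfl fun k hk => if_pos hk
    linarith [e3, e4]
  have hfin2 : Hval Z Y = (1 - Y.exp * H19aux.cv m α + H19aux.ev m α * Y.p (2 * j - 1)) +
      (H19aux.cv m α * (∑' n, f2 n) - 2 * ∑' n, f1 n) := by
    rw [hfin]
    linear_combination (2 : ℝ) * hsplit1 - H19aux.cv m α * hsplit2
  -- bounds on cv
  have hα1' : α ≤ 1 := by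
    refine le_trans hα1 ?_
    rw [div_le_one (by linarith)]; linarith
  have hcv0 : 0 ≤ H19aux.cv m α := by
    rw [H19aux.cv]
    have : (0:ℝ) < (m : ℝ) * ((m : ℝ) + 1) := by nlinarith
    have h1' : (0:ℝ) ≤ 1 / ((m : ℝ) + 1) := by positivity
    have h2' : (0:ℝ) ≤ (1 - α) / ((m : ℝ) * ((m : ℝ) + 1)) :=
      div_nonneg (by linarith) (le_of_lt this)
    linarith
  have hcv2 : 2 ≤ H19aux.cv m α * (2 * (m : ℝ) + 1) := by
    have hα2 : α * (2 * (m : ℝ) + 1) ≤ (m : ℝ) + 1 :=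
      (le_div_iff₀ (by linarith)).mp hα1
    have hMM : (0:ℝ) < (m : ℝ) * ((m : ℝ) + 1) := by nlinarith
    have e5 : H19aux.cv m α * (2 * (m : ℝ) + 1) - 2 =
        ((m : ℝ) + 1 - α * (2 * (m : ℝ) + 1)) / ((m : ℝ) * ((m : ℝ) + 1)) := by
      rw [H19aux.cv]; field_simp; ring
    have e6 : 0 ≤ ((m : ℝ) + 1 - α * (2 * (m : ℝ) + 1)) / ((m : ℝ) * ((m : ℝ) + 1)) :=
      div_nonneg (by linarith) (le_of_lt hMM)
    linarith
  have hkey : 2 * (∑' n, f1 n) ≤ H19aux.cv m α * (∑' n, f2 n) := by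
    rw [← tsum_mul_left, ← tsum_mul_left]
    refine Summable.tsum_le_tsum ?_ (hf1sum.mul_left 2) (hf2sum.mul_left _)
    intro n
    by_cases h : n ∈ Finset.range (2 * m + 1)
    · rw [hf1, hf2]; dsimp only; rw [if_pos h, if_pos h]; simp
    · rw [hf1, hf2]; dsimp only; rw [if_neg h, if_neg h]
      have hn : (2 * (m : ℝ) + 1) ≤ (n : ℝ) := by
        have : 2 * m + 1 ≤ n := by simp [Finset.mem_range] at h; omega
        exact_mod_cast this
      have hy := Y.nonneg n
      have h5 : 2 ≤ H19aux.cv m α * (n : ℝ) := by nlinarith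
      calc 2 * Y.p n ≤ (H19aux.cv m α * (n : ℝ)) * Y.p n :=
            mul_le_mul_of_nonneg_right h5 hy
        _ = H19aux.cv m α * ((n : ℝ) * Y.p n) := by ring
  constructor
  · rw [hfin2]
    have ht1 : 0 ≤ ∑' n, f1 n := tsum_nonneg hf1nonneg
    simp only [H19aux.cv, H19aux.ev] at hkey ⊢
    linarith [hkey]
  · intro hY0
    have ht1 : ∑' n, f1 n = 0 := by
      have : ∀ n, f1 n = 0 := by
        intro n; rw [hf1]; dsimp only; split_ifs with h
        · rfl
        · exact hY0 n (by simp [Finset.mem_range] at h; omega)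
      rw [tsum_congr this, tsum_zero]
    have ht2 : ∑' n, f2 n = 0 := by
      have : ∀ n, f2 n = 0 := by
        intro n; rw [hf2]; dsimp only; split_ifs with h
        · rfl
        · rw [hY0 n (by simp [Finset.mem_range] at h; omega), mul_zero]
      rw [tsum_congr this, tsum_zero]
    rw [hfin2, ht1, ht2]
    simp only [H19aux.cv, H19aux.ev]
    ring
end
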